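/- arXiv:2011.11935 — 3 statements merged into one kernel-verified Lean document; each statement's English description precedes it below -/
import Mathlib

section
/- Let G be a k-regular finite simple graph on n vertices whose adjacency matrix has smallest eigenvalue λ_min(G) < 0. Then the independence (stability) number α of G satisfies α ≤ n / (1 + k/(-λ_min(G))). -/
open scoped Classical Matrix

/-- The adjacency matrix of a simple graph, over `ℝ`. -/
noncomputable def adjMat {V : Type*} [Fintype V] (G : SimpleGraph V) : Matrix V V ℝ :=
  Matrix.of fun i j => if G.Adj i j then (1 : ℝ) else 0

/-- The smallest (real) eigenvalue of a matrix. -/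
noncomputable def matMinEig {V : Type*} [Fintype V] (A : Matrix V V ℝ) : ℝ :=
  sInf {μ : ℝ | ∃ v : V → ℝ, v ≠ 0 ∧ A.mulVec v = μ • v}

/-- The smallest eigenvalue of a graph. -/
noncomputable def minEig {V : Type*} [Fintype V] (G : SimpleGraph V) : ℝ :=
  matMinEig (adjMat G)

/-- The degree (valency) of a vertex. -/
noncomputable def deg {V : Type*} [Fintype V] (G : SimpleGraph V) (v : V) : ℕ :=
  (G.neighborSet v).ncard

lemma adjMat_isHermitian_s0 {n : ℕ} (G : SimpleGraph (Fin n)) : (adjMat G).IsHermitian := by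
  ext i j
  simp [adjMat, Matrix.conjTranspose_apply, G.adj_comm]

lemma adjMat_abs_le {n : ℕ} (G : SimpleGraph (Fin n)) (i j : Fin n) : |adjMat G i j| ≤ 1 := by
  simp only [adjMat, Matrix.of_apply]
  split_ifs <;> norm_num

lemma eig_abs_le {n : ℕ} (G : SimpleGraph (Fin n)) {μ : ℝ} (v : Fin n → ℝ) (hv : v ≠ 0)
    (h : (adjMat G).mulVec v = μ • v) : |μ| ≤ n := by
  obtain ⟨i₀, hi₀⟩ := Function.ne_iff.mp hv
  obtain ⟨i, -, hi⟩ := Finset.exists_max_image Finset.univ (fun i => |v i|) ⟨i₀, Finset.mem_univ _⟩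
  have hvi : 0 < |v i| := lt_of_lt_of_le (abs_pos.mpr hi₀) (hi i₀ (Finset.mem_univ _))
  have hmv : μ * v i = ∑ j, adjMat G i j * v j := by
    have := congrFun h i
    simp only [Matrix.mulVec, dotProduct, Pi.smul_apply, smul_eq_mul] at this
    linarith [this]
  have hb : |μ * v i| ≤ (n : ℝ) * |v i| := by
    rw [hmv]
    calc |∑ j, adjMat G i j * v j| ≤ ∑ j, |adjMat G i j * v j| := Finset.abs_sum_le_sum_abs _ _
      _ ≤ ∑ _j : Fin n, |v i| := by
          apply Finset.sum_le_sum
          intro j _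
          rw [abs_mul]
          calc |adjMat G i j| * |v j| ≤ 1 * |v i| :=
              mul_le_mul (adjMat_abs_le G i j) (hi j (Finset.mem_univ _)) (abs_nonneg _) zero_le_one
            _ = |v i| := one_mul _
      _ = (n : ℝ) * |v i| := by simp [Finset.sum_const, mul_comm]
  rw [abs_mul] at hb
  exact le_of_mul_le_mul_right hb hvi

lemma adjMat_rowsum {n : ℕ} (G : SimpleGraph (Fin n)) (k : ℕ) (hreg : ∀ v, deg G v = k)
    (i : Fin n) : ∑ j, adjMat G i j = (k : ℝ) := by
  have hdeg : G.degree i = k := by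
    rw [← hreg i]
    simp [deg, SimpleGraph.degree, SimpleGraph.neighborFinset, Set.ncard_eq_toFinset_card']
  calc ∑ j, adjMat G i j = ∑ j, if G.Adj i j then (1 : ℝ) else 0 := rfl
    _ = ((Finset.univ.filter (G.Adj i)).card : ℝ) := by rw [Finset.sum_boole]
    _ = (G.degree i : ℝ) := by rw [← SimpleGraph.neighborFinset_eq_filter]; rfl
    _ = (k : ℝ) := by rw [hdeg]

/-- **Hoffman ratio bound.** If `G` is a `k`-regular graph on `n` vertices with
negative smallest eigenvalue, then every independent (stable) set `s` satisfies
`|s| ≤ n / (1 + k / (-λ_min G))`; i.e. the independence number is at most that bound. -/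
theorem stmt0 {n : ℕ} (G : SimpleGraph (Fin n)) (k : ℕ)
    (hreg : ∀ v, deg G v = k) (hmin : minEig G < 0)
    (s : Finset (Fin n)) (hs : ∀ x ∈ s, ∀ y ∈ s, x ≠ y → ¬ G.Adj x y) :
    (s.card : ℝ) ≤ (n : ℝ) / (1 + (k : ℝ) / (-(minEig G))) := by
  classical
  set A := adjMat G with hAdef
  have hA : A.IsHermitian := adjMat_isHermitian_s0 G
  set lam := minEig G with hlamdef
  set S : Set ℝ := {μ : ℝ | ∃ v : Fin n → ℝ, v ≠ 0 ∧ A.mulVec v = μ • v} with hSdef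
  have hSne : S.Nonempty := by
    by_contra h
    rw [Set.not_nonempty_iff_eq_empty] at h
    rw [hlamdef] at hmin
    unfold minEig matMinEig at hmin
    rw [← hAdef, ← hSdef, h, Real.sInf_empty] at hmin
    exact lt_irrefl 0 hmin
  have hn : 0 < n := by
    obtain ⟨μ, v, hv, -⟩ := hSne
    rcases Nat.eq_zero_or_pos n with h0 | h0
    · exact absurd (funext fun i => absurd i.isLt (by omega)) hv
    · exact h0
  have hnR : 0 < (n : ℝ) := by exact_mod_cast hn
  have hbdd : BddBelow S := by
    refine ⟨-(n : ℝ), fun μ hμ => ?_⟩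
    obtain ⟨v, hv, hmv⟩ := hμ
    have := eig_abs_le G v hv hmv
    linarith [neg_abs_le μ]
  have hlow : ∀ i, lam ≤ hA.eigenvalues i := by
    intro i
    apply csInf_le hbdd
    exact ⟨⇑(hA.eigenvectorBasis i),
      by simpa using hA.eigenvectorBasis.orthonormal.ne_zero i,
      hA.mulVec_eigenvectorBasis i⟩
  have hpsd : (A - lam • (1 : Matrix (Fin n) (Fin n) ℝ)).PosSemidef := by
    have hU : (hA.eigenvectorUnitary : Matrix (Fin n) (Fin n) ℝ) *
        star (hA.eigenvectorUnitary : Matrix (Fin n) (Fin n) ℝ) = 1 :=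
      Matrix.mem_unitaryGroup_iff.mp hA.eigenvectorUnitary.2
    have hdec : A - lam • (1 : Matrix (Fin n) (Fin n) ℝ) =
        (hA.eigenvectorUnitary : Matrix (Fin n) (Fin n) ℝ) *
          Matrix.diagonal (fun i => hA.eigenvalues i - lam) *
          star (hA.eigenvectorUnitary : Matrix (Fin n) (Fin n) ℝ) := by
      conv_lhs => rw [hA.spectral_theorem]
      have hdiag : Matrix.diagonal (fun i => hA.eigenvalues i - lam) =
          Matrix.diagonal (RCLike.ofReal ∘ hA.eigenvalues) -
            lam • (1 : Matrix (Fin n) (Fin n) ℝ) := by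
        ext i j
        by_cases h : i = j <;>
          simp [h, Matrix.diagonal_apply, Matrix.one_apply]
      rw [hdiag, Matrix.mul_sub, Matrix.sub_mul]
      congr 1
      rw [Matrix.mul_smul, Matrix.mul_one, Matrix.smul_mul, hU]
    rw [hdec]
    exact (Matrix.posSemidef_diagonal_iff.mpr
      (fun i => sub_nonneg.mpr (hlow i))).mul_mul_conjTranspose_same _
  set c : ℝ := (s.card : ℝ) with hc
  set q : ℝ := c / n with hq
  set x : Fin n → ℝ := fun i => if i ∈ s then 1 else 0 with hx
  set w : Fin n → ℝ := fun i => x i - q with hw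
  have hquad : 0 ≤ dotProduct w (A.mulVec w) - lam * dotProduct w w := by
    have h := hpsd.dotProduct_mulVec_nonneg w
    simpa [Matrix.sub_mulVec, dotProduct_sub, Matrix.smul_mulVec,
      dotProduct_smul, smul_eq_mul] using h
  have hsym : ∀ i j, A i j = A j i := by
    intro i j
    simp [hAdef, adjMat, G.adj_comm]
  -- basic sums
  have hsumx : ∑ i, x i = c := by
    simp [hx, Finset.sum_boole, Finset.filter_mem_eq_inter, hc]
  have hrow : ∀ i, ∑ j, A i j = (k : ℝ) := adjMat_rowsum G k hreg
  have h0 : ∑ i, ∑ j, A i j * x i * x j = 0 := by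
    apply Finset.sum_eq_zero
    intro i _
    apply Finset.sum_eq_zero
    intro j _
    by_cases hi : i ∈ s
    · by_cases hj : j ∈ s
      · by_cases hij : i = j
        · subst hij; simp [hAdef, adjMat]
        · have := hs i hi j hj hij
          simp [hAdef, adjMat, this]
      · simp [hx, hj]
    · simp [hx, hi]
  have cross1 : ∑ i, ∑ j, A i j * x i = (k : ℝ) * c := by
    calc ∑ i, ∑ j, A i j * x i = ∑ i, (∑ j, A i j) * x i := by
          simp [Finset.sum_mul]
      _ = ∑ i, (k : ℝ) * x i := by
          apply Finset.sum_congr rfl; intro i _; rw [hrow i]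
      _ = (k : ℝ) * c := by rw [← Finset.mul_sum, hsumx]
  have cross2 : ∑ i, ∑ j, A i j * x j = (k : ℝ) * c := by
    rw [Finset.sum_comm]
    calc ∑ j, ∑ i, A i j * x j = ∑ j, (∑ i, A i j) * x j := by
          simp [Finset.sum_mul]
      _ = ∑ j, (k : ℝ) * x j := by
          apply Finset.sum_congr rfl
          intro j _
          congr 1
          rw [show ∑ i, A i j = ∑ i, A j i from Finset.sum_congr rfl fun i _ => hsym i j, hrow j]
      _ = (k : ℝ) * c := by rw [← Finset.mul_sum, hsumx]
  have htot : ∑ i : Fin n, ∑ j, A i j = (n : ℝ) * k := by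
    rw [Finset.sum_congr rfl fun i _ => hrow i]
    simp [mul_comm]
  have hdot : ∀ v : Fin n → ℝ, dotProduct v (A.mulVec v) = ∑ i, ∑ j, A i j * v i * v j := by
    intro v
    simp only [dotProduct, Matrix.mulVec, Finset.mul_sum]
    apply Finset.sum_congr rfl
    intro i _
    apply Finset.sum_congr rfl
    intro j _
    ring
  have hwAw : dotProduct w (A.mulVec w) = -(k : ℝ) * c ^ 2 / n := by
    rw [hdot]
    have hexp : ∀ i j : Fin n, A i j * w i * w j =
        A i j * x i * x j - q * (A i j * x i) - q * (A i j * x j) + q ^ 2 * A i j := by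
      intro i j
      simp only [hw]
      ring
    simp_rw [hexp, Finset.sum_add_distrib, Finset.sum_sub_distrib, ← Finset.mul_sum]
    rw [h0, cross1, cross2, htot, hq]
    field_simp
    ring
  have hxx : ∀ i, x i * x i = x i := by
    intro i
    by_cases h : i ∈ s <;> simp [hx, h]
  have hww : dotProduct w w = c - c ^ 2 / n := by
    unfold dotProduct
    have hexp : ∀ i : Fin n, w i * w i = x i * x i - 2 * q * x i + q ^ 2 := by
      intro i
      simp only [hw]
      ring
    simp_rw [hexp, hxx, Finset.sum_add_distrib, Finset.sum_sub_distrib, ← Finset.mul_sum, hsumx]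
    simp [Finset.sum_const, hq]
    field_simp
    ring
  rw [hwAw, hww] at hquad
  -- final arithmetic
  set m : ℝ := -lam with hm
  have hmpos : 0 < m := by simp [hm]; linarith
  have hkey : ((k : ℝ) + m) * c ^ 2 ≤ m * c * n := by
    have h1 : 0 ≤ -(k : ℝ) * c ^ 2 / n - lam * (c - c ^ 2 / n) := hquad
    have h2 : lam = -m := by rw [hm]; ring
    rw [h2] at h1
    have h3 : (-(k : ℝ) * c ^ 2 / ↑n - (-m) * (c - c ^ 2 / ↑n)) * ↑n
        = m * c * ↑n - ((k : ℝ) + m) * c ^ 2 := by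
      field_simp
      ring
    have h4 := mul_nonneg h1 hnR.le
    rw [h3] at h4
    linarith
  have hcnn : 0 ≤ c := by positivity
  have hden : 0 < 1 + (k : ℝ) / m := by positivity
  rw [le_div_iff₀ hden]
  rcases eq_or_lt_of_le hcnn with hc0 | hcpos
  · rw [← hc0]
    simpa using le_of_lt hnR
  · have h3 : ((k : ℝ) + m) * c ≤ m * n := by nlinarith [hkey, mul_pos hcpos hcpos]
    have h4 : c * (1 + (k : ℝ) / m) = (((k : ℝ) + m) * c) / m := by
      field_simp
      ring
    rw [h4, div_le_iff₀ hmpos]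
    linarith [h3, mul_comm m (n : ℝ)]
end

section
/- (Serre) Fix an integer k ≥ 1. For each ε > 0 there exists a positive constant c = c(k, ε) such that for any k-regular finite simple graph G of order n, the number of eigenvalues of G (counted with multiplicity) that are larger than (2-ε)·√(k-1) is at least c·n. -/
open scoped Classical

lemma adjMat_isHermitian {V : Type*} [Fintype V] (G : SimpleGraph V) :
    (adjMat G).IsHermitian := by
  unfold Matrix.IsHermitian
  ext i j
  simp only [Matrix.conjTranspose_apply, adjMat, Matrix.of_apply, star_trivial]
  rw [SimpleGraph.adj_comm]

open Finset

section Serre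

set_option linter.unusedSectionVars false

variable {V : Type*} [Fintype V] [DecidableEq V]

noncomputable def sph (G : SimpleGraph V) (v : V) (j : ℕ) : Finset V :=
  univ.filter (fun u => G.edist v u = j)

noncomputable def gball (G : SimpleGraph V) (v : V) (r : ℕ) : Finset V :=
  univ.filter (fun u => G.edist v u ≤ r)

lemma adjMat_mulVec (G : SimpleGraph V) (x : V → ℝ) (u : V) :
    (adjMat G).mulVec x u = ∑ w ∈ G.neighborFinset u, x w := by
  classical
  rw [Matrix.mulVec, dotProduct]
  rw [SimpleGraph.neighborFinset_eq_filter, Finset.sum_filter]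
  congr 1; ext w
  simp [adjMat, ite_mul]

lemma edist_le_succ_of_adj (G : SimpleGraph V) {v u w : V} (h : G.Adj u w) :
    G.edist v w ≤ G.edist v u + 1 := by
  calc G.edist v w ≤ G.edist v u + G.edist u w := SimpleGraph.edist_triangle
  _ = G.edist v u + 1 := by rw [SimpleGraph.edist_eq_one_iff_adj.mpr h]

lemma exists_adj_sph (G : SimpleGraph V) {v u : V} {j : ℕ}
    (h : G.edist v u = (j + 1 : ℕ)) : ∃ w, G.Adj w u ∧ G.edist v w = j := by
  obtain ⟨p, hp⟩ := SimpleGraph.exists_walk_of_edist_eq_coe h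
  cases hrev : p.reverse with
  | nil =>
      exfalso
      have := congrArg SimpleGraph.Walk.length hrev
      rw [SimpleGraph.Walk.length_reverse, hp] at this
      simp at this
  | cons ha q =>
      rename_i w
      refine ⟨w, (G.adj_comm _ _).mp ha, ?_⟩
      have hq : q.reverse.length = j := by
        have := congrArg SimpleGraph.Walk.length hrev
        rw [SimpleGraph.Walk.length_reverse, hp] at this
        simp only [SimpleGraph.Walk.length_cons] at this
        rw [SimpleGraph.Walk.length_reverse]
        omega
      have hle : G.edist v w ≤ (j : ℕ∞) := by
        calc G.edist v w ≤ q.reverse.length := SimpleGraph.edist_le _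
        _ = (j : ℕ∞) := by rw [hq]
      have hfin : G.edist v w ≠ ⊤ := fun hc => by simp [hc] at hle
      lift G.edist v w to ℕ using hfin with m hm
      have h2 : G.edist v u ≤ G.edist v w + 1 := edist_le_succ_of_adj G ((G.adj_comm _ _).mp ha)
      rw [h, ← hm] at h2
      have hmj : m ≤ j := by exact_mod_cast hle
      have hjm : (j : ℕ) + 1 ≤ m + 1 := by exact_mod_cast h2
      have : m = j := by omega
      exact_mod_cast this

/-- every vertex of the `j+1`-sphere is adjacent to a vertex of the `j`-sphere -/
lemma sph_subset_biUnion (G : SimpleGraph V) (v : V) (j : ℕ) :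
    sph G v (j+1) ⊆ (sph G v j).biUnion (fun w => G.neighborFinset w ∩ sph G v (j+1)) := by
  intro u hu
  simp only [sph, mem_filter, mem_univ, true_and] at hu
  obtain ⟨w, hadj, hw⟩ := exists_adj_sph G (by exact_mod_cast hu)
  simp only [mem_biUnion, sph, mem_filter, mem_univ, true_and, mem_inter,
    SimpleGraph.mem_neighborFinset]
  exact ⟨w, hw, hadj, by exact_mod_cast hu⟩

lemma card_sph_succ_le (G : SimpleGraph V) {k : ℕ} (hreg : ∀ v, G.degree v = k)
    (v : V) (j : ℕ) : (sph G v (j+1)).card ≤ k * (sph G v j).card := by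
  calc (sph G v (j+1)).card
      ≤ ((sph G v j).biUnion (fun w => G.neighborFinset w ∩ sph G v (j+1))).card :=
        card_le_card (sph_subset_biUnion G v j)
    _ ≤ ∑ w ∈ sph G v j, (G.neighborFinset w ∩ sph G v (j+1)).card := card_biUnion_le
    _ ≤ ∑ w ∈ sph G v j, k := by
        refine sum_le_sum fun w _ => ?_
        calc (G.neighborFinset w ∩ sph G v (j+1)).card ≤ (G.neighborFinset w).card :=
              card_le_card inter_subset_left
          _ = k := hreg w
    _ = k * (sph G v j).card := by rw [sum_const, smul_eq_mul, mul_comm]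

lemma nbr_inter_sph_le (G : SimpleGraph V) {k : ℕ} (hreg : ∀ v, G.degree v = k)
    (v : V) {j : ℕ} (hj : 1 ≤ j) {w : V} (hw : w ∈ sph G v j) :
    (G.neighborFinset w ∩ sph G v (j+1)).card ≤ k - 1 := by
  simp only [sph, mem_filter, mem_univ, true_and] at hw
  obtain ⟨j', rfl⟩ : ∃ j', j = j' + 1 := ⟨j - 1, by omega⟩
  obtain ⟨w', hadj, hw'⟩ := exists_adj_sph G hw
  have hsub : G.neighborFinset w ∩ sph G v (j'+1+1) ⊆ (G.neighborFinset w).erase w' := by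
    intro u hu
    simp only [mem_inter, sph, mem_filter, mem_univ, true_and] at hu
    refine mem_erase.mpr ⟨?_, hu.1⟩
    rintro rfl
    rw [hw'] at hu
    simp only [Nat.cast_inj] at hu
    omega
  calc (G.neighborFinset w ∩ sph G v (j'+1+1)).card ≤ ((G.neighborFinset w).erase w').card :=
        card_le_card hsub
    _ ≤ (G.neighborFinset w).card - 1 := by
        rw [card_erase_of_mem (by simpa [SimpleGraph.mem_neighborFinset] using hadj.symm)]
    _ = k - 1 := by rw [SimpleGraph.card_neighborFinset_eq_degree, hreg w]

lemma card_sph_succ_le' (G : SimpleGraph V) {k : ℕ} (hreg : ∀ v, G.degree v = k)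
    (v : V) {j : ℕ} (hj : 1 ≤ j) : (sph G v (j+1)).card ≤ (k-1) * (sph G v j).card := by
  calc (sph G v (j+1)).card
      ≤ ((sph G v j).biUnion (fun w => G.neighborFinset w ∩ sph G v (j+1))).card :=
        card_le_card (sph_subset_biUnion G v j)
    _ ≤ ∑ w ∈ sph G v j, (G.neighborFinset w ∩ sph G v (j+1)).card := card_biUnion_le
    _ ≤ ∑ w ∈ sph G v j, (k-1) := sum_le_sum fun w hw => nbr_inter_sph_le G hreg v hj hw
    _ = (k-1) * (sph G v j).card := by rw [sum_const, smul_eq_mul, mul_comm]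

lemma card_sph_chain (G : SimpleGraph V) {k : ℕ} (hreg : ∀ v, G.degree v = k)
    (v : V) {i j : ℕ} (hi : 1 ≤ i) (hij : i ≤ j) :
    (sph G v j).card ≤ (k-1)^(j-i) * (sph G v i).card := by
  induction j with
  | zero => omega
  | succ j ih =>
      rcases eq_or_lt_of_le hij with heq | hlt
      · rw [← heq]; simp
      · have hij' : i ≤ j := by omega
        calc (sph G v (j+1)).card ≤ (k-1) * (sph G v j).card :=
              card_sph_succ_le' G hreg v (le_trans hi hij')
          _ ≤ (k-1) * ((k-1)^(j-i) * (sph G v i).card) :=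
              Nat.mul_le_mul_left _ (ih hij')
          _ = (k-1)^(j+1-i) * (sph G v i).card := by
              rw [← mul_assoc, ← pow_succ']
              congr 2
              omega

lemma gball_zero (G : SimpleGraph V) (v : V) : gball G v 0 = {v} := by
  ext u
  simp only [gball, mem_filter, mem_univ, true_and, mem_singleton, Nat.cast_zero,
    nonpos_iff_eq_zero, SimpleGraph.edist_eq_zero_iff]
  exact eq_comm

lemma card_gball_le (G : SimpleGraph V) {k : ℕ} (hreg : ∀ v, G.degree v = k)
    (v : V) (r : ℕ) : (gball G v r).card ≤ (k+1)^r := by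
  induction r with
  | zero => simp [gball_zero]
  | succ r ih =>
      have hsplit : gball G v (r+1) ⊆ gball G v r ∪ sph G v (r+1) := by
        intro u hu
        simp only [gball, sph, mem_filter, mem_univ, true_and, mem_union] at hu ⊢
        rcases lt_or_eq_of_le hu with hlt | heq
        · left
          have hne : G.edist v u ≠ ⊤ := (hlt.trans_le le_top).ne
          lift G.edist v u to ℕ using hne with m hm
          have : m < r+1 := by exact_mod_cast hlt
          exact_mod_cast Nat.lt_succ_iff.mp this
        · right; exact heq
      have hsph : (sph G v (r+1)).card ≤ k * (gball G v r).card := by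
        calc (sph G v (r+1)).card ≤ k * (sph G v r).card := card_sph_succ_le G hreg v r
          _ ≤ k * (gball G v r).card := by
              refine Nat.mul_le_mul_left _ (card_le_card ?_)
              intro u hu
              simp only [sph, gball, mem_filter, mem_univ, true_and] at hu ⊢
              exact le_of_eq hu
      calc (gball G v (r+1)).card ≤ (gball G v r ∪ sph G v (r+1)).card := card_le_card hsplit
        _ ≤ (gball G v r).card + (sph G v (r+1)).card := card_union_le _ _
        _ ≤ (gball G v r).card + k * (gball G v r).card := by omega
        _ = (k+1) * (gball G v r).card := by ring
        _ ≤ (k+1) * (k+1)^r := Nat.mul_le_mul_left _ ih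
        _ = (k+1)^(r+1) := by rw [pow_succ, mul_comm]

/-- greedy packing -/
lemma exists_packing (G : SimpleGraph V) {k : ℕ} (hreg : ∀ v, G.degree v = k) (D : ℕ) :
    ∀ S : Finset V, ∃ C ⊆ S,
      (∀ c ∈ C, ∀ c' ∈ C, c ≠ c' → (D : ℕ∞) < G.edist c c') ∧
      S.card ≤ C.card * (k+1)^D := by
  intro S
  induction S using Finset.strongInduction with
  | _ S ih =>
    rcases S.eq_empty_or_nonempty with rfl | ⟨v, hv⟩
    · exact ⟨∅, by simp⟩
    · have hvb : v ∈ gball G v D := by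
        simp [gball, SimpleGraph.edist_self]
      have hss : S \ gball G v D ⊂ S := by
        refine Finset.ssubset_iff_of_subset (sdiff_subset) |>.mpr ⟨v, hv, ?_⟩
        simp [hvb]
      obtain ⟨C', hC'sub, hC'far, hC'card⟩ := ih _ hss
      refine ⟨insert v C', ?_, ?_, ?_⟩
      · intro c hc
        rcases mem_insert.mp hc with rfl | hc
        · exact hv
        · exact (mem_sdiff.mp (hC'sub hc)).1
      · have hfar : ∀ c ∈ C', (D : ℕ∞) < G.edist v c := by
          intro c hc
          have := (mem_sdiff.mp (hC'sub hc)).2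
          simp only [gball, mem_filter, mem_univ, true_and, not_le] at this
          exact this
        intro c hc c' hc' hne
        rcases mem_insert.mp hc with rfl | hcm
        · rcases mem_insert.mp hc' with rfl | hcm'
          · exact absurd rfl hne
          · exact hfar c' hcm'
        · rcases mem_insert.mp hc' with rfl | hcm'
          · rw [SimpleGraph.edist_comm]
            exact hfar c hcm
          · exact hC'far c hcm c' hcm' hne
      · have hvC' : v ∉ C' := fun hc => by
          have := (mem_sdiff.mp (hC'sub hc)).2
          exact this hvb
        rw [card_insert_of_notMem hvC']
        have hcover : S ⊆ (S \ gball G v D) ∪ gball G v D := by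
          intro u hu
          by_cases hub : u ∈ gball G v D
          · exact mem_union_right _ hub
          · exact mem_union_left _ (mem_sdiff.mpr ⟨hu, hub⟩)
        calc S.card ≤ (S \ gball G v D).card + (gball G v D).card :=
              le_trans (card_le_card hcover) (card_union_le _ _)
          _ ≤ C'.card * (k+1)^D + (k+1)^D := by
              have := card_gball_le G hreg v D
              omega
          _ = (C'.card + 1) * (k+1)^D := by ring

lemma variational (G : SimpleGraph V) (t : ℝ) (C : Finset V) (y : V → V → ℝ)
    (horth : ∀ c ∈ C, ∀ c' ∈ C, c ≠ c' →
      (∑ u, y c u * y c' u = 0) ∧ (∑ u, (adjMat G).mulVec (y c) u * y c' u = 0))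
    (hray : ∀ c ∈ C, t * ∑ u, y c u * y c u < ∑ u, (adjMat G).mulVec (y c) u * y c u) :
    C.card ≤ (univ.filter fun i => t < (adjMat_isHermitian G).eigenvalues i).card := by
  by_contra hcon
  push_neg at hcon
  have hA := adjMat_isHermitian G
  set A := adjMat G with hAdef
  set e := hA.eigenvectorBasis with he
  set lam := hA.eigenvalues with hlam
  set good := (univ.filter fun i => t < lam i) with hgood
  set M : Matrix {i // i ∈ good} {c // c ∈ C} ℝ :=
    fun g c => ∑ u, (e g.1 : EuclideanSpace ℝ V) u * y c.1 u with hM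
  have hdim : Fintype.card {i // i ∈ good} < Fintype.card {c // c ∈ C} := by
    simpa [Fintype.card_coe] using hcon
  obtain ⟨cv, hcv0, hker⟩ : ∃ cv : {c // c ∈ C} → ℝ, cv ≠ 0 ∧ M.mulVec cv = 0 := by
    by_contra hno
    push_neg at hno
    have hinj : Function.Injective M.mulVecLin := by
      rw [← LinearMap.ker_eq_bot, LinearMap.ker_eq_bot']
      intro m hm
      by_contra hm0
      exact (hno m hm0) (by simpa [Matrix.mulVecLin_apply] using hm)
    have hfr := LinearMap.finrank_le_finrank_of_injective hinj
    simp only [Module.finrank_fintype_fun_eq_card] at hfr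
    omega
  set x : V → ℝ := fun u => ∑ c : {c // c ∈ C}, cv c * y c.1 u with hx
  set w : V → ℝ := fun i => ∑ u, (e i : EuclideanSpace ℝ V) u * x u with hw
  -- orthonormality of eigenbasis, as plain sums
  have horthnorm : ∀ i j : V,
      (∑ u, (e i : EuclideanSpace ℝ V) u * (e j : EuclideanSpace ℝ V) u)
        = if i = j then 1 else 0 := by
    intro i j
    have h1 := (orthonormal_iff_ite.mp e.orthonormal) i j
    rw [PiLp.inner_apply] at h1
    simpa [RCLike.inner_apply', conj_trivial, mul_comm] using h1
  -- expansion of x in the eigenbasis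
  have hexp : ∀ u, x u = ∑ i : V, w i * (e i : EuclideanSpace ℝ V) u := by
    intro u
    have h2 := e.sum_repr' (WithLp.toLp 2 x)
    have h3 : (∑ i : V, (inner ℝ (e i) (WithLp.toLp 2 x) : ℝ) • e i) u = x u :=
      congrArg (fun v : EuclideanSpace ℝ V => v u) h2
    rw [← h3, WithLp.ofLp_sum, Finset.sum_apply]
    refine sum_congr rfl fun i _ => ?_
    simp only [hw, Pi.smul_apply, PiLp.smul_apply, PiLp.inner_apply, RCLike.inner_apply',
      conj_trivial, smul_eq_mul]
  have pair : ∀ d d' : V → ℝ,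
      (∑ u, (∑ i : V, d i * (e i : EuclideanSpace ℝ V) u) *
        (∑ j : V, d' j * (e j : EuclideanSpace ℝ V) u)) = ∑ i : V, d i * d' i := by
    intro d d'
    calc (∑ u, (∑ i : V, d i * (e i : EuclideanSpace ℝ V) u) *
          (∑ j : V, d' j * (e j : EuclideanSpace ℝ V) u))
        = ∑ u, ∑ i : V, ∑ j : V,
            (d i * (e i : EuclideanSpace ℝ V) u) * (d' j * (e j : EuclideanSpace ℝ V) u) := by
          refine sum_congr rfl fun u _ => ?_
          rw [Finset.sum_mul_sum]
      _ = ∑ i : V, ∑ j : V, (d i * d' j) *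
            ∑ u, (e i : EuclideanSpace ℝ V) u * (e j : EuclideanSpace ℝ V) u := by
          rw [Finset.sum_comm]
          refine sum_congr rfl fun i _ => ?_
          rw [Finset.sum_comm]
          refine sum_congr rfl fun j _ => ?_
          rw [Finset.mul_sum]
          refine sum_congr rfl fun u _ => ?_
          ring
      _ = ∑ i : V, d i * d' i := by
          refine sum_congr rfl fun i _ => ?_
          rw [Finset.sum_eq_single i]
          · rw [horthnorm i i, if_pos rfl]; ring
          · intro j _ hj
            rw [horthnorm i j, if_neg fun h => hj h.symm, mul_zero]
          · intro h; exact absurd (mem_univ i) h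
  -- A x in the eigenbasis
  have hAxrep : ∀ u, A.mulVec x u = ∑ i : V, (lam i * w i) * (e i : EuclideanSpace ℝ V) u := by
    intro u
    have hmv : ∀ i : V, A.mulVec (e i : EuclideanSpace ℝ V) u
        = lam i * (e i : EuclideanSpace ℝ V) u := by
      intro i
      have := congrFun (hA.mulVec_eigenvectorBasis i) u
      simpa [Pi.smul_apply, smul_eq_mul] using this
    calc A.mulVec x u = ∑ v, A u v * x v := rfl
      _ = ∑ v, ∑ i : V, A u v * (w i * (e i : EuclideanSpace ℝ V) v) := by
          refine sum_congr rfl fun v _ => ?_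
          rw [hexp v, Finset.mul_sum]
      _ = ∑ i : V, ∑ v, A u v * (w i * (e i : EuclideanSpace ℝ V) v) := Finset.sum_comm
      _ = ∑ i : V, w i * ∑ v, A u v * (e i : EuclideanSpace ℝ V) v := by
          refine sum_congr rfl fun i _ => ?_
          rw [Finset.mul_sum]
          refine sum_congr rfl fun v _ => ?_
          ring
      _ = ∑ i : V, (lam i * w i) * (e i : EuclideanSpace ℝ V) u := by
          refine sum_congr rfl fun i _ => ?_
          have : (∑ v, A u v * (e i : EuclideanSpace ℝ V) v) = A.mulVec (e i : EuclideanSpace ℝ V) u := rfl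
          rw [this, hmv i]
          ring
  have hxx : ∑ u, x u * x u = ∑ i : V, w i * w i := by
    calc ∑ u, x u * x u
        = ∑ u, (∑ i : V, w i * (e i : EuclideanSpace ℝ V) u) *
            (∑ j : V, w j * (e j : EuclideanSpace ℝ V) u) := by
          refine sum_congr rfl fun u _ => ?_
          rw [← hexp u]
      _ = ∑ i : V, w i * w i := pair w w
  have hAxx : ∑ u, A.mulVec x u * x u = ∑ i : V, lam i * (w i * w i) := by
    calc ∑ u, A.mulVec x u * x u
        = ∑ u, (∑ i : V, (lam i * w i) * (e i : EuclideanSpace ℝ V) u) *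
            (∑ j : V, w j * (e j : EuclideanSpace ℝ V) u) := by
          refine sum_congr rfl fun u _ => ?_
          rw [← hexp u, ← hAxrep u]
      _ = ∑ i : V, (lam i * w i) * w i := pair _ w
      _ = ∑ i : V, lam i * (w i * w i) := by
          refine sum_congr rfl fun i _ => ?_; ring
  -- coefficients on good eigenvectors vanish
  have hwgood : ∀ i (hi : i ∈ good), w i = 0 := by
    intro i hi
    have h4 := congrFun hker ⟨i, hi⟩
    simp only [Matrix.mulVec, dotProduct, hM, Pi.zero_apply] at h4
    simp only [hw, hx]
    calc ∑ u, (e i : EuclideanSpace ℝ V) u * ∑ c : {c // c ∈ C}, cv c * y c.1 u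
        = ∑ u, ∑ c : {c // c ∈ C}, cv c * ((e i : EuclideanSpace ℝ V) u * y c.1 u) := by
          refine sum_congr rfl fun u _ => ?_
          rw [Finset.mul_sum]
          refine sum_congr rfl fun c _ => ?_
          ring
      _ = ∑ c : {c // c ∈ C}, cv c * ∑ u, (e i : EuclideanSpace ℝ V) u * y c.1 u := by
          rw [Finset.sum_comm]
          refine sum_congr rfl fun c _ => ?_
          rw [Finset.mul_sum]
      _ = ∑ c : {c // c ∈ C}, (∑ u, (e i : EuclideanSpace ℝ V) u * y c.1 u) * cv c := by
          refine sum_congr rfl fun c _ => ?_; ring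
      _ = 0 := h4
  -- upper bound from eigenvalues
  have hup : ∑ i : V, lam i * (w i * w i) ≤ t * ∑ i : V, w i * w i := by
    rw [Finset.mul_sum]
    refine sum_le_sum fun i _ => ?_
    by_cases hi : i ∈ good
    · rw [hwgood i hi]; simp
    · have hle : lam i ≤ t := by
        simp only [hgood, mem_filter, mem_univ, true_and] at hi
        exact le_of_not_gt hi
      have := mul_self_nonneg (w i)
      nlinarith
  -- expansion over C
  have hsplit : ∀ z : V → V → ℝ,
      (∀ c ∈ C, ∀ c' ∈ C, c ≠ c' → ∑ u, z c u * y c' u = 0) →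
      ∑ u, (∑ c : {c // c ∈ C}, cv c * z c.1 u) * x u
        = ∑ c : {c // c ∈ C}, (cv c * cv c) * ∑ u, z c.1 u * y c.1 u := by
    intro z hz
    calc ∑ u, (∑ c : {c // c ∈ C}, cv c * z c.1 u) * x u
        = ∑ u, ∑ c : {c // c ∈ C}, ∑ c' : {c // c ∈ C},
            (cv c * z c.1 u) * (cv c' * y c'.1 u) := by
          refine sum_congr rfl fun u _ => ?_
          rw [hx, Finset.sum_mul_sum]
      _ = ∑ c : {c // c ∈ C}, ∑ c' : {c // c ∈ C},
            (cv c * cv c') * ∑ u, z c.1 u * y c'.1 u := by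
          rw [Finset.sum_comm]
          refine sum_congr rfl fun c _ => ?_
          rw [Finset.sum_comm]
          refine sum_congr rfl fun c' _ => ?_
          rw [Finset.mul_sum]
          refine sum_congr rfl fun u _ => ?_
          ring
      _ = ∑ c : {c // c ∈ C}, (cv c * cv c) * ∑ u, z c.1 u * y c.1 u := by
          refine sum_congr rfl fun c _ => ?_
          rw [Finset.sum_eq_single c]
          · intro c' _ hc'
            rw [hz c.1 c.2 c'.1 c'.2 (fun h => hc' (Subtype.ext h).symm), mul_zero]
          · intro h; exact absurd (mem_univ c) h
  have hxxC : ∑ u, x u * x u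
      = ∑ c : {c // c ∈ C}, (cv c * cv c) * ∑ u, y c.1 u * y c.1 u := by
    have := hsplit y (fun c hc c' hc' hne => (horth c hc c' hc' hne).1)
    simpa [hx] using this
  have hAxxC : ∑ u, A.mulVec x u * x u
      = ∑ c : {c // c ∈ C}, (cv c * cv c) * ∑ u, A.mulVec (y c.1) u * y c.1 u := by
    have hAxu : ∀ u, A.mulVec x u = ∑ c : {c // c ∈ C}, cv c * A.mulVec (y c.1) u := by
      intro u
      calc A.mulVec x u = ∑ v, A u v * ∑ c : {c // c ∈ C}, cv c * y c.1 v := rfl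
        _ = ∑ v, ∑ c : {c // c ∈ C}, cv c * (A u v * y c.1 v) := by
            refine sum_congr rfl fun v _ => ?_
            rw [Finset.mul_sum]
            refine sum_congr rfl fun c _ => ?_
            ring
        _ = ∑ c : {c // c ∈ C}, cv c * ∑ v, A u v * y c.1 v := by
            rw [Finset.sum_comm]
            refine sum_congr rfl fun c _ => ?_
            rw [Finset.mul_sum]
        _ = ∑ c : {c // c ∈ C}, cv c * A.mulVec (y c.1) u := rfl
    calc ∑ u, A.mulVec x u * x u
        = ∑ u, (∑ c : {c // c ∈ C}, cv c * A.mulVec (y c.1) u) * x u := by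
          refine sum_congr rfl fun u _ => ?_
          rw [hAxu u]
      _ = ∑ c : {c // c ∈ C}, (cv c * cv c) * ∑ u, A.mulVec (y c.1) u * y c.1 u :=
          hsplit (fun c => A.mulVec (y c)) (fun c hc c' hc' hne => (horth c hc c' hc' hne).2)
  -- strict lower bound
  have hlow : t * ∑ u, x u * x u < ∑ u, A.mulVec x u * x u := by
    rw [hxxC, hAxxC, Finset.mul_sum]
    obtain ⟨c0, hc0⟩ := Function.ne_iff.mp hcv0
    refine sum_lt_sum (fun c _ => ?_) ⟨c0, mem_univ c0, ?_⟩
    · by_cases h : cv c = 0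
      · simp [h]
      · have h1 := (hray c.1 c.2).le
        have h2 : 0 ≤ cv c * cv c := mul_self_nonneg _
        calc t * ((cv c * cv c) * ∑ u, y c.1 u * y c.1 u)
            = (cv c * cv c) * (t * ∑ u, y c.1 u * y c.1 u) := by ring
          _ ≤ (cv c * cv c) * ∑ u, A.mulVec (y c.1) u * y c.1 u :=
              mul_le_mul_of_nonneg_left h1 h2
    · have h1 := hray c0.1 c0.2
      have h2 : 0 < cv c0 * cv c0 := mul_self_pos.mpr hc0
      calc t * ((cv c0 * cv c0) * ∑ u, y c0.1 u * y c0.1 u)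
          = (cv c0 * cv c0) * (t * ∑ u, y c0.1 u * y c0.1 u) := by ring
        _ < (cv c0 * cv c0) * ∑ u, A.mulVec (y c0.1) u * y c0.1 u :=
            mul_lt_mul_of_pos_left h1 h2
  rw [hxx] at hlow
  rw [hAxx] at hlow
  linarith

noncomputable def adjPairs (G : SimpleGraph V) : Finset (V × V) :=
  univ.filter (fun p => G.Adj p.1 p.2)

lemma sum_adjPairs (G : SimpleGraph V) (h : V → V → ℝ) :
    ∑ p ∈ adjPairs G, h p.1 p.2 = ∑ u, ∑ w ∈ G.neighborFinset u, h u w := by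
  rw [adjPairs, Finset.sum_filter, Fintype.sum_prod_type]
  refine sum_congr rfl fun u _ => ?_
  rw [SimpleGraph.neighborFinset_eq_filter, Finset.sum_filter]

lemma sum_adjPairs_swap (G : SimpleGraph V) (h : V → V → ℝ) :
    ∑ p ∈ adjPairs G, h p.1 p.2 = ∑ p ∈ adjPairs G, h p.2 p.1 := by
  refine Finset.sum_nbij' (fun p => (p.2, p.1)) (fun p => (p.2, p.1)) ?_ ?_ ?_ ?_ ?_
  · intro p hp
    simp only [adjPairs, mem_filter, mem_univ, true_and] at hp ⊢
    exact hp.symm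
  · intro p hp
    simp only [adjPairs, mem_filter, mem_univ, true_and] at hp ⊢
    exact hp.symm
  · intro p _; rfl
  · intro p _; rfl
  · intro p _; rfl

lemma ip_eq_sum_adjPairs (G : SimpleGraph V) (x : V → ℝ) :
    ∑ u, (adjMat G).mulVec x u * x u = ∑ p ∈ adjPairs G, x p.1 * x p.2 := by
  rw [sum_adjPairs G (fun a b => x a * x b)]
  refine sum_congr rfl fun u _ => ?_
  rw [adjMat_mulVec, Finset.sum_mul]
  refine sum_congr rfl fun w _ => ?_
  ring

lemma lap_id (G : SimpleGraph V) {k : ℕ} (hreg : ∀ v, G.degree v = k) (x : V → ℝ) :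
    ∑ p ∈ adjPairs G, (x p.1 - x p.2) * (x p.1 - x p.2)
      = 2 * ((k : ℝ) * ∑ u, x u * x u - ∑ u, (adjMat G).mulVec x u * x u) := by
  have h1 : ∑ p ∈ adjPairs G, x p.1 * x p.1 = (k:ℝ) * ∑ u, x u * x u := by
    rw [sum_adjPairs G (fun a b => x a * x a), Finset.mul_sum]
    refine sum_congr rfl fun u _ => ?_
    rw [sum_const, SimpleGraph.card_neighborFinset_eq_degree, hreg u, nsmul_eq_mul]
  have h2 : ∑ p ∈ adjPairs G, x p.2 * x p.2 = (k:ℝ) * ∑ u, x u * x u := by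
    rw [sum_adjPairs_swap G (fun a b => x b * x b)]
    exact h1
  have h3 : ∑ p ∈ adjPairs G, (x p.1 - x p.2) * (x p.1 - x p.2)
      = (∑ p ∈ adjPairs G, x p.1 * x p.1) + (∑ p ∈ adjPairs G, x p.2 * x p.2)
        - 2 * ∑ p ∈ adjPairs G, x p.1 * x p.2 := by
    rw [← Finset.sum_add_distrib, Finset.mul_sum, ← Finset.sum_sub_distrib]
    refine sum_congr rfl fun p _ => ?_
    ring
  rw [h3, h1, h2, ← ip_eq_sum_adjPairs]
  ring

noncomputable def testVec (G : SimpleGraph V) (k R : ℕ) (v : V) : V → ℝ :=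
  fun u => if G.edist v u ≤ (R:ℕ∞) then (Real.sqrt ((k:ℝ)-1))⁻¹ ^ (max (G.edist v u).toNat 1) else 0

lemma testVec_support (G : SimpleGraph V) (k R : ℕ) (v u : V)
    (h : testVec G k R v u ≠ 0) : G.edist v u ≤ (R:ℕ∞) := by
  by_contra hc
  rw [testVec, if_neg hc] at h
  exact h rfl

lemma testVec_sph (G : SimpleGraph V) (k R : ℕ) (v u : V) {j : ℕ}
    (hj : G.edist v u = (j:ℕ∞)) :
    testVec G k R v u = if j ≤ R then (Real.sqrt ((k:ℝ)-1))⁻¹ ^ (max j 1) else 0 := by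
  rw [testVec, hj]
  by_cases h : j ≤ R
  · rw [if_pos (by exact_mod_cast h), if_pos h]
    simp
  · rw [if_neg (by exact_mod_cast h), if_neg h]

lemma testVec_norm_pos (G : SimpleGraph V) {k : ℕ} (hk : 2 ≤ k) (R : ℕ) (v : V) :
    0 < ∑ u, testVec G k R v u * testVec G k R v u := by
  have hs : 0 < Real.sqrt ((k:ℝ)-1) := Real.sqrt_pos.mpr (by
    have : (2:ℝ) ≤ (k:ℝ) := by exact_mod_cast hk
    linarith)
  have hq : 0 < (Real.sqrt ((k:ℝ)-1))⁻¹ := inv_pos.mpr hs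
  have hv : testVec G k R v v = (Real.sqrt ((k:ℝ)-1))⁻¹ := by
    have h0 : G.edist v v = ((0:ℕ):ℕ∞) := by simp [SimpleGraph.edist_self]
    rw [testVec_sph G k R v v h0, if_pos (Nat.zero_le R)]
    norm_num
  have hterm : 0 < testVec G k R v v * testVec G k R v v := by
    rw [hv]; positivity
  exact lt_of_lt_of_le hterm (Finset.single_le_sum
    (f := fun u => testVec G k R v u * testVec G k R v u)
    (fun u _ => mul_self_nonneg _) (mem_univ v))

lemma rayleigh_testVec (G : SimpleGraph V) {k : ℕ} (hk : 2 ≤ k)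
    (hreg : ∀ v, G.degree v = k) (v : V) {R : ℕ} (hR : 1 ≤ R) :
    (2 * Real.sqrt ((k:ℝ)-1) - ((k:ℝ)-1)/R) * ∑ u, testVec G k R v u * testVec G k R v u
      ≤ ∑ u, (adjMat G).mulVec (testVec G k R v) u * testVec G k R v u := by
  set s : ℝ := Real.sqrt ((k:ℝ)-1) with hsdef
  have hk1 : (1:ℝ) ≤ (k:ℝ) - 1 := by
    have : (2:ℝ) ≤ (k:ℝ) := by exact_mod_cast hk
    linarith
  have hspos : 0 < s := Real.sqrt_pos.mpr (by linarith)
  have hss : s * s = (k:ℝ) - 1 := Real.mul_self_sqrt (by linarith)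
  set q : ℝ := s⁻¹ with hqdef
  have hqpos : 0 < q := inv_pos.mpr hspos
  have hsq : s * q = 1 := mul_inv_cancel₀ (ne_of_gt hspos)
  have hqq : ((k:ℝ)-1) * (q * q) = 1 := by
    rw [← hss]
    calc s * s * (q * q) = (s*q) * (s*q) := by ring
    _ = 1 := by rw [hsq]; ring
  have hks : 0 ≤ (k:ℝ) - 2*s := by nlinarith [sq_nonneg (s-1)]
  set x : V → ℝ := testVec G k R v with hxdef
  -- values of x as function of the sphere index
  set fN : ℕ → ℝ := fun j => if j ≤ R then q ^ (max j 1) else 0 with hfN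
  have hxval : ∀ (u : V) (j : ℕ), G.edist v u = (j:ℕ∞) → x u = fN j := by
    intro u j hj
    exact testVec_sph G k R v u hj
  have hfN_ge1 : ∀ j, 1 ≤ j → j ≤ R → fN j = q ^ j := by
    intro j h1 h2
    rw [hfN]
    simp only [if_pos h2]
    rw [max_eq_left h1]
  -- the norm lower bound W
  set W : ℝ := ∑ j ∈ Icc 1 R, ((sph G v j).card : ℝ) * (q^j * q^j) with hW
  have hxsq_nonneg : ∀ u : V, 0 ≤ x u * x u := fun u => mul_self_nonneg _
  have hWle : W ≤ ∑ u, x u * x u := by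
    have hdisj : ∀ a ∈ (Icc 1 R), ∀ b ∈ (Icc 1 R), a ≠ b →
        Disjoint (sph G v a) (sph G v b) := by
      intro a _ b _ hab
      refine disjoint_left.mpr ?_
      intro u hu hu'
      simp only [sph, mem_filter, mem_univ, true_and] at hu hu'
      rw [hu] at hu'
      exact hab (by exact_mod_cast hu')
    calc W = ∑ j ∈ Icc 1 R, ∑ u ∈ sph G v j, x u * x u := by
          refine sum_congr rfl fun j hj => ?_
          simp only [mem_Icc] at hj
          have hval : ∀ u ∈ sph G v j, x u * x u = q^j * q^j := by
            intro u hu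
            simp only [sph, mem_filter, mem_univ, true_and] at hu
            rw [hxval u j hu, hfN_ge1 j hj.1 hj.2]
          rw [Finset.sum_congr rfl hval, sum_const, nsmul_eq_mul]
      _ = ∑ u ∈ (Icc 1 R).biUnion (fun j => sph G v j), x u * x u :=
          (Finset.sum_biUnion hdisj).symm
      _ ≤ ∑ u, x u * x u :=
          Finset.sum_le_sum_of_subset_of_nonneg (subset_univ _) (fun u _ _ => hxsq_nonneg u)
  have hcast : ((k-1:ℕ):ℝ) = (k:ℝ) - 1 := by
    have h1 : (1:ℕ) ≤ k := by omega
    push_cast [Nat.cast_sub h1]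
    ring
  have hqnn : 0 ≤ q := hqpos.le
  have hqpow : ∀ m : ℕ, 0 ≤ q^m * q^m := fun m =>
    mul_nonneg (pow_nonneg hqnn m) (pow_nonneg hqnn m)
  set SR : ℝ := ((sph G v R).card : ℝ) * (q^R * q^R) with hSR
  -- Claim C : R * SR ≤ W
  have hCchain : ∀ j ∈ Icc 1 R, SR ≤ ((sph G v j).card : ℝ) * (q^j * q^j) := by
    intro j hj
    simp only [mem_Icc] at hj
    set m := R - j with hm
    have hcard : ((sph G v R).card : ℝ) ≤ (((k-1:ℕ):ℝ))^m * ((sph G v j).card : ℝ) := by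
      exact_mod_cast card_sph_chain G hreg v hj.1 hj.2
    rw [hcast] at hcard
    have h2 : ((k:ℝ)-1)^m * (q^m * q^m) = 1 := by
      calc ((k:ℝ)-1)^m * (q^m * q^m) = (((k:ℝ)-1) * (q*q))^m := by
            rw [mul_pow, mul_pow]
        _ = 1 := by rw [hqq]; exact one_pow m
    have hkey : ((k:ℝ)-1)^m * (q^R * q^R) = q^j * q^j := by
      have hRm : R = j + m := by omega
      rw [hRm, pow_add]
      linear_combination (q^j * q^j) * h2
    calc SR ≤ ((((k:ℝ)-1)^m * ((sph G v j).card:ℝ))) * (q^R*q^R) :=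
          mul_le_mul_of_nonneg_right hcard (hqpow R)
      _ = ((sph G v j).card:ℝ) * (((k:ℝ)-1)^m * (q^R*q^R)) := by ring
      _ = ((sph G v j).card:ℝ) * (q^j * q^j) := by rw [hkey]
  have hC : (R:ℝ) * SR ≤ W := by
    have h3 : ∑ _j ∈ Icc 1 R, SR ≤ W := sum_le_sum hCchain
    rw [sum_const, Nat.card_Icc, nsmul_eq_mul] at h3
    simpa using h3
  -- the coefficient identity
  have hco : ((k:ℝ)-1) * ((1-q)*(1-q)) = (k:ℝ) - 2*s := by
    linear_combination (2*q - q*q) * hss + (s*q - 2*s + 1) * hsq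
  -- the edge sum
  set g : V × V → ℝ := fun p => (x p.1 - x p.2) * (x p.1 - x p.2) with hg
  have hgnn : ∀ p : V × V, 0 ≤ g p := fun p => mul_self_nonneg _
  set P := adjPairs G with hP
  set Plt := P.filter (fun p => G.edist v p.1 < G.edist v p.2) with hPlt
  have hxeq : ∀ p : V × V, G.edist v p.1 = G.edist v p.2 → g p = 0 := by
    intro p h
    have hx12 : x p.1 = x p.2 := by
      rw [hxdef]
      rw [testVec, testVec, h]
    rw [hg]
    simp only [hx12, sub_self, mul_zero, zero_mul]
  have hsym : ∑ p ∈ P, g p = 2 * ∑ p ∈ Plt, g p := by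
    have hsplit := Finset.sum_filter_add_sum_filter_not P
      (fun p => G.edist v p.1 < G.edist v p.2) g
    have hgt : ∑ p ∈ P.filter (fun p => ¬ G.edist v p.1 < G.edist v p.2), g p
        = ∑ p ∈ P.filter (fun p => G.edist v p.2 < G.edist v p.1), g p := by
      refine (Finset.sum_subset ?_ ?_).symm
      · intro p hp
        simp only [mem_filter] at hp ⊢
        exact ⟨hp.1, not_lt_of_gt hp.2⟩
      · intro p hp hnp
        simp only [mem_filter] at hp hnp
        have he : G.edist v p.1 = G.edist v p.2 := by
          have h1 : ¬ G.edist v p.2 < G.edist v p.1 := fun hc => hnp ⟨hp.1, hc⟩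
          exact le_antisymm (not_lt.mp h1) (not_lt.mp hp.2)
        exact hxeq p he
    have hswap : ∑ p ∈ P.filter (fun p => G.edist v p.2 < G.edist v p.1), g p
        = ∑ p ∈ Plt, g p := by
      refine Finset.sum_nbij' (fun p => (p.2, p.1)) (fun p => (p.2, p.1)) ?_ ?_ ?_ ?_ ?_
      · intro p hp
        simp only [hPlt, hP, adjPairs, mem_filter, mem_univ, true_and] at hp ⊢
        exact ⟨hp.1.symm, hp.2⟩
      · intro p hp
        simp only [hPlt, hP, adjPairs, mem_filter, mem_univ, true_and] at hp ⊢
        exact ⟨hp.1.symm, hp.2⟩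
      · intro p _; rfl
      · intro p _; rfl
      · intro p _
        rw [hg]
        ring
    linarith
  -- the classes Q j
  set Q : ℕ → Finset (V × V) := fun j => P.filter
    (fun p => G.edist v p.1 = (j:ℕ∞) ∧ G.edist v p.2 = ((j+1:ℕ):ℕ∞)) with hQ
  have hQsub : Plt.filter (fun p => g p ≠ 0) ⊆ (range (R+1)).biUnion Q := by
    intro p hp
    simp only [hPlt, mem_filter, and_assoc] at hp
    obtain ⟨hpP, hlt, hgne⟩ := hp
    have hadj : G.Adj p.1 p.2 := by
      simpa [hP, adjPairs] using hpP
    have hne1 : G.edist v p.1 ≠ ⊤ := (hlt.trans_le le_top).ne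
    lift G.edist v p.1 to ℕ using hne1 with m hm
    have hle2 : G.edist v p.2 ≤ (m:ℕ∞) + 1 := by
      rw [hm]
      exact edist_le_succ_of_adj G hadj
    have hge2 : (m:ℕ∞) + 1 ≤ G.edist v p.2 := ENat.add_one_le_iff (by simp) |>.mpr hlt
    have he2 : G.edist v p.2 = ((m+1:ℕ):ℕ∞) := by
      rw [le_antisymm hle2 hge2]
      push_cast
      ring
    have hmR : m ≤ R := by
      by_contra hc
      push_neg at hc
      have hx1 : x p.1 = 0 := by
        rw [hxval p.1 m hm.symm]
        exact if_neg (by omega)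
      have hx2 : x p.2 = 0 := by
        rw [hxval p.2 (m+1) he2]
        exact if_neg (by omega)
      refine hgne ?_
      show (x p.1 - x p.2) * (x p.1 - x p.2) = 0
      rw [hx1, hx2]
      ring
    simp only [mem_biUnion, mem_range]
    exact ⟨m, by omega, mem_filter.mpr ⟨hpP, hm.symm, he2⟩⟩
  have hQdisj : ∀ a ∈ range (R+1), ∀ b ∈ range (R+1), a ≠ b → Disjoint (Q a) (Q b) := by
    intro a _ b _ hab
    refine disjoint_left.mpr fun p hp hp' => ?_
    simp only [hQ, mem_filter] at hp hp'
    rw [hp.2.1] at hp'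
    exact hab (by exact_mod_cast hp'.2.1)
  have hPltle : ∑ p ∈ Plt, g p ≤ ∑ j ∈ range (R+1), ∑ p ∈ Q j, g p := by
    calc ∑ p ∈ Plt, g p = ∑ p ∈ Plt.filter (fun p => g p ≠ 0), g p :=
          (Finset.sum_filter_ne_zero Plt).symm
      _ ≤ ∑ p ∈ (range (R+1)).biUnion Q, g p :=
          Finset.sum_le_sum_of_subset_of_nonneg hQsub (fun p _ _ => hgnn p)
      _ = ∑ j ∈ range (R+1), ∑ p ∈ Q j, g p := Finset.sum_biUnion hQdisj
  have hQval : ∀ j : ℕ, ∀ p ∈ Q j, g p = (fN j - fN (j+1)) * (fN j - fN (j+1)) := by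
    intro j p hp
    simp only [hQ, mem_filter] at hp
    show (x p.1 - x p.2) * (x p.1 - x p.2) = _
    rw [hxval p.1 j hp.2.1, hxval p.2 (j+1) hp.2.2]
  have hQcount : ∀ j : ℕ, 1 ≤ j → (Q j).card ≤ (k-1) * (sph G v j).card := by
    intro j hj
    have hfib : ∀ p ∈ Q j, p.1 ∈ sph G v j := by
      intro p hp
      simp only [hQ, mem_filter] at hp
      simp only [sph, mem_filter, mem_univ, true_and]
      exact hp.2.1
    rw [Finset.card_eq_sum_card_fiberwise hfib]
    calc ∑ w ∈ sph G v j, ((Q j).filter (fun p => p.1 = w)).card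
        ≤ ∑ w ∈ sph G v j, (k-1) := by
          refine sum_le_sum fun w hw => ?_
          calc ((Q j).filter (fun p => p.1 = w)).card
              ≤ (G.neighborFinset w ∩ sph G v (j+1)).card := by
                refine Finset.card_le_card_of_injOn (fun p => p.2) ?_ ?_
                · intro p hp
                  simp only [mem_coe, mem_filter, hQ] at hp
                  obtain ⟨⟨hpP, he1, he2⟩, hp1⟩ := hp
                  have hadj : G.Adj p.1 p.2 := by simpa [hP, adjPairs] using hpP
                  simp only [mem_coe, mem_inter, SimpleGraph.mem_neighborFinset, sph, mem_filter,
                    mem_univ, true_and]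
                  constructor
                  · rw [← hp1]; exact hadj
                  · exact_mod_cast he2
                · intro p hp p' hp' hpp
                  simp only [mem_coe, mem_filter] at hp hp'
                  exact Prod.ext (hp.2.trans hp'.2.symm) hpp
            _ ≤ k - 1 := nbr_inter_sph_le G hreg v hj hw
      _ = (k-1) * (sph G v j).card := by rw [sum_const, smul_eq_mul, mul_comm]
  -- per-class bounds
  have hf0 : fN 0 - fN 1 = 0 := by
    rw [hfN]
    simp only [if_pos (Nat.zero_le R), if_pos hR]
    norm_num
  have hmain : ∑ j ∈ range (R+1), ∑ p ∈ Q j, g p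
      ≤ ((k:ℝ) - 2*s) * W + ((k:ℝ)-1) * SR := by
    have hperj : ∀ j ∈ range (R+1), ∑ p ∈ Q j, g p
        = ((Q j).card : ℝ) * ((fN j - fN (j+1)) * (fN j - fN (j+1))) := by
      intro j _
      rw [Finset.sum_congr rfl (hQval j), sum_const, nsmul_eq_mul]
    rw [Finset.sum_congr rfl hperj]
    have hsplitR : range (R+1) = insert 0 (insert R (Ioo 0 R)) := by
      ext j
      simp only [mem_range, mem_insert, mem_Ioo]
      omega
    rw [hsplitR, Finset.sum_insert, Finset.sum_insert]
    · have hterm0 : ((Q 0).card : ℝ) * ((fN 0 - fN (0+1)) * (fN 0 - fN (0+1))) = 0 := by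
        rw [show (0+1 : ℕ) = 1 from rfl, hf0]
        ring
      have htermR : ((Q R).card : ℝ) * ((fN R - fN (R+1)) * (fN R - fN (R+1)))
          ≤ ((k:ℝ)-1) * SR := by
        have hgR : fN R - fN (R+1) = q^R := by
          rw [hfN]
          simp only [if_pos (le_refl R), if_neg (by omega : ¬ R+1 ≤ R)]
          rw [max_eq_left hR]
          ring
        rw [hgR]
        have hcount : ((Q R).card : ℝ) ≤ ((k:ℝ)-1) * ((sph G v R).card : ℝ) := by
          rw [← hcast]
          exact_mod_cast hQcount R hR
        calc ((Q R).card : ℝ) * (q^R * q^R)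
            ≤ (((k:ℝ)-1) * ((sph G v R).card : ℝ)) * (q^R * q^R) :=
              mul_le_mul_of_nonneg_right hcount (hqpow R)
          _ = ((k:ℝ)-1) * SR := by rw [hSR]; ring
      have htermIoo : ∑ j ∈ Ioo 0 R, ((Q j).card : ℝ) *
          ((fN j - fN (j+1)) * (fN j - fN (j+1))) ≤ ((k:ℝ) - 2*s) * W := by
        have hWpos : ∀ j ∈ Icc 1 R, 0 ≤ ((sph G v j).card : ℝ) * (q^j * q^j) := by
          intro j _
          exact mul_nonneg (Nat.cast_nonneg _) (hqpow j)
        calc ∑ j ∈ Ioo 0 R, ((Q j).card : ℝ) * ((fN j - fN (j+1)) * (fN j - fN (j+1)))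
            ≤ ∑ j ∈ Ioo 0 R, ((k:ℝ) - 2*s) * (((sph G v j).card : ℝ) * (q^j * q^j)) := by
              refine sum_le_sum fun j hj => ?_
              simp only [mem_Ioo] at hj
              have hj1 : 1 ≤ j := hj.1
              have hjR : j + 1 ≤ R := hj.2
              have hfj : fN j = q^j := hfN_ge1 j hj1 (by omega)
              have hfj1 : fN (j+1) = q^(j+1) := hfN_ge1 (j+1) (by omega) hjR
              have hcount : ((Q j).card : ℝ) ≤ ((k:ℝ)-1) * ((sph G v j).card : ℝ) := by
                rw [← hcast]
                exact_mod_cast hQcount j hj1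
              have hgval : ((k:ℝ)-1) * ((fN j - fN (j+1)) * (fN j - fN (j+1)))
                  = ((k:ℝ) - 2*s) * (q^j * q^j) := by
                rw [hfj, hfj1, pow_succ]
                linear_combination (q^j * q^j) * hco
              calc ((Q j).card : ℝ) * ((fN j - fN (j+1)) * (fN j - fN (j+1)))
                  ≤ (((k:ℝ)-1) * ((sph G v j).card : ℝ)) *
                      ((fN j - fN (j+1)) * (fN j - fN (j+1))) :=
                    mul_le_mul_of_nonneg_right hcount (mul_self_nonneg _)
                _ = ((sph G v j).card : ℝ) *
                      (((k:ℝ)-1) * ((fN j - fN (j+1)) * (fN j - fN (j+1)))) := by ring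
                _ = ((k:ℝ) - 2*s) * (((sph G v j).card : ℝ) * (q^j * q^j)) := by
                    rw [hgval]; ring
          _ = ((k:ℝ) - 2*s) * ∑ j ∈ Ioo 0 R, ((sph G v j).card : ℝ) * (q^j * q^j) := by
              rw [Finset.mul_sum]
          _ ≤ ((k:ℝ) - 2*s) * W := by
              refine mul_le_mul_of_nonneg_left ?_ hks
              rw [hW]
              refine Finset.sum_le_sum_of_subset_of_nonneg ?_ ?_
              · intro j hj
                simp only [mem_Ioo, mem_Icc] at hj ⊢
                omega
              · intro j hj _
                exact mul_nonneg (Nat.cast_nonneg _) (hqpow j)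
      linarith [hterm0, htermR, htermIoo]
    · simp only [mem_Ioo]
      omega
    · simp only [mem_insert, mem_Ioo]
      omega
  -- put everything together
  have hlap := lap_id G hreg x
  have hip : ∑ p ∈ P, g p
      = 2 * ((k:ℝ) * (∑ u, x u * x u) - ∑ u, (adjMat G).mulVec x u * x u) := hlap
  set Nrm : ℝ := ∑ u, x u * x u with hNrm
  set ipA : ℝ := ∑ u, (adjMat G).mulVec x u * x u with hipA
  have hRpos : (0:ℝ) < R := by exact_mod_cast hR
  have hSRN : SR ≤ Nrm / R := by
    rw [le_div_iff₀ hRpos]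
    calc SR * R = (R:ℝ) * SR := by ring
      _ ≤ W := hC
      _ ≤ Nrm := hWle
  have h7 : ((k:ℝ)-1) * SR ≤ (((k:ℝ)-1)/R) * Nrm := by
    calc ((k:ℝ)-1) * SR ≤ ((k:ℝ)-1) * (Nrm / R) :=
          mul_le_mul_of_nonneg_left hSRN (by linarith)
      _ = (((k:ℝ)-1)/R) * Nrm := by ring
  have h8 : ((k:ℝ) - 2*s) * W ≤ ((k:ℝ) - 2*s) * Nrm :=
    mul_le_mul_of_nonneg_left hWle hks
  have h9 : ∑ p ∈ P, g p ≤ 2 * (((k:ℝ) - 2*s) * W + ((k:ℝ)-1) * SR) := by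
    rw [hsym]
    have := hPltle.trans hmain
    linarith
  linarith

lemma cross_orth (G : SimpleGraph V) {R : ℕ} {c c' : V} (x x' : V → ℝ)
    (hs : ∀ u, x u ≠ 0 → G.edist c u ≤ (R:ℕ∞))
    (hs' : ∀ u, x' u ≠ 0 → G.edist c' u ≤ (R:ℕ∞))
    (hfar : ((2*R+1 : ℕ) : ℕ∞) < G.edist c c') :
    (∑ u, x u * x' u = 0) ∧ (∑ u, (adjMat G).mulVec x u * x' u = 0) := by
  have htri : ∀ u : V, G.edist c u ≤ (R:ℕ∞) + 1 → G.edist c' u ≤ (R:ℕ∞) → False := by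
    intro u h1 h2
    have h3 : G.edist c c' ≤ G.edist c u + G.edist u c' := SimpleGraph.edist_triangle
    have h4 : G.edist u c' = G.edist c' u := SimpleGraph.edist_comm
    have h5 : G.edist c c' ≤ ((R:ℕ∞)+1) + (R:ℕ∞) := by
      calc G.edist c c' ≤ G.edist c u + G.edist c' u := by rw [← h4]; exact h3
        _ ≤ ((R:ℕ∞)+1) + (R:ℕ∞) := add_le_add h1 h2
    have h6 : ((R:ℕ∞)+1) + (R:ℕ∞) = ((2*R+1 : ℕ) : ℕ∞) := by
      push_cast
      ring
    rw [h6] at h5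
    exact absurd h5 (not_le.mpr hfar)
  constructor
  · refine Finset.sum_eq_zero fun u _ => ?_
    by_contra h
    have hx : x u ≠ 0 := fun h0 => h (by rw [h0]; ring)
    have hx' : x' u ≠ 0 := fun h0 => h (by rw [h0]; ring)
    exact htri u ((hs u hx).trans (by simp)) (hs' u hx')
  · refine Finset.sum_eq_zero fun u _ => ?_
    by_contra h
    have hx : (adjMat G).mulVec x u ≠ 0 := fun h0 => h (by rw [h0]; ring)
    have hx' : x' u ≠ 0 := fun h0 => h (by rw [h0]; ring)
    rw [adjMat_mulVec] at hx
    obtain ⟨w, hw, hxw⟩ := Finset.exists_ne_zero_of_sum_ne_zero hx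
    have hadj : G.Adj w u := by
      rw [SimpleGraph.mem_neighborFinset] at hw
      exact hw.symm
    have h1 : G.edist c u ≤ (R:ℕ∞) + 1 :=
      le_trans (edist_le_succ_of_adj G hadj) (add_le_add_left (hs w hxw) 1)
    exact htri u h1 (hs' u hx')

/-- the k = 1 test vector : indicator of the closed neighbourhood -/
noncomputable def oneVec (G : SimpleGraph V) (c : V) : V → ℝ :=
  fun u => if G.edist c u ≤ (1:ℕ∞) then (1:ℝ) else 0

lemma oneVec_support (G : SimpleGraph V) (c u : V) (h : oneVec G c u ≠ 0) :
    G.edist c u ≤ ((1:ℕ):ℕ∞) := by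
  by_contra hc
  rw [oneVec, if_neg (by exact_mod_cast hc)] at h
  exact h rfl

lemma oneVec_rayleigh (G : SimpleGraph V) {k : ℕ} (hk : 1 ≤ k)
    (hreg : ∀ v, G.degree v = k) (c : V) :
    0 < ∑ u, (adjMat G).mulVec (oneVec G c) u * oneVec G c u := by
  obtain ⟨u0, hu0⟩ : (G.neighborFinset c).Nonempty := by
    rw [← Finset.card_pos, SimpleGraph.card_neighborFinset_eq_degree, hreg c]
    omega
  have hadj : G.Adj c u0 := (SimpleGraph.mem_neighborFinset _ _ _).mp hu0
  rw [ip_eq_sum_adjPairs]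
  have hnn : ∀ p ∈ adjPairs G, 0 ≤ oneVec G c p.1 * oneVec G c p.2 := by
    intro p _
    have h1 : ∀ w : V, 0 ≤ oneVec G c w := by
      intro w
      rw [oneVec]
      split <;> norm_num
    exact mul_nonneg (h1 _) (h1 _)
  have hmem : (c, u0) ∈ adjPairs G := by
    simp only [adjPairs, mem_filter, mem_univ, true_and]
    exact hadj
  have hval : oneVec G c (c, u0).1 * oneVec G c (c, u0).2 = 1 := by
    have h1 : oneVec G c c = 1 := by
      rw [oneVec, if_pos (by rw [SimpleGraph.edist_self]; exact zero_le)]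
    have h2 : oneVec G c u0 = 1 := by
      rw [oneVec, if_pos (le_of_eq (SimpleGraph.edist_eq_one_iff_adj.mpr hadj))]
    show oneVec G c c * oneVec G c u0 = 1
    rw [h1, h2]; ring
  calc (0:ℝ) < 1 := one_pos
    _ = oneVec G c (c, u0).1 * oneVec G c (c, u0).2 := hval.symm
    _ ≤ ∑ p ∈ adjPairs G, oneVec G c p.1 * oneVec G c p.2 :=
        Finset.single_le_sum hnn hmem

end Serre

open Finset in
/-- **Serre.** Fix `k ≥ 1`. For each `ε > 0` there is `c = c(k,ε) > 0` such that any
`k`-regular graph of order `n` has at least `c·n` eigenvalues (with multiplicity)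
larger than `(2 - ε)√(k-1)`. -/
theorem stmt3 (k : ℕ) (hk : 1 ≤ k) (ε : ℝ) (hε : 0 < ε) :
    ∃ c : ℝ, 0 < c ∧ ∀ (n : ℕ) (G : SimpleGraph (Fin n)),
      (∀ v, deg G v = k) →
      c * (n : ℝ) ≤
        ((Finset.univ.filter fun i =>
          (2 - ε) * Real.sqrt ((k : ℝ) - 1) < (adjMat_isHermitian G).eigenvalues i).card : ℝ) := by
  classical
  have hdegreg : ∀ (n : ℕ) (G : SimpleGraph (Fin n)), (∀ v, deg G v = k) →
      (∀ v, G.degree v = k) := by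
    intro n G hdeg v
    have h1 := hdeg v
    rwa [deg, Set.ncard_eq_toFinset_card', ← SimpleGraph.neighborFinset_def] at h1
  rcases eq_or_lt_of_le hk with hk1 | hk2
  · -- k = 1 : the threshold is 0
    refine ⟨(((k+1:ℕ):ℝ)^(2*1+1:ℕ))⁻¹, by positivity, ?_⟩
    intro n G hdeg
    have hreg := hdegreg n G hdeg
    have ht : (2 - ε) * Real.sqrt ((k:ℝ)-1) = 0 := by
      rw [← hk1]
      simp
    obtain ⟨C, hCsub, hCfar, hCcard⟩ := exists_packing G hreg (2*1+1) Finset.univ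
    have hvar := variational G ((2 - ε) * Real.sqrt ((k:ℝ)-1)) C (fun c => oneVec G c)
      (fun c hc c' hc' hne => cross_orth G (R := 1) _ _
        (oneVec_support G c) (oneVec_support G c') (hCfar c hc c' hc' hne))
      (fun c hc => by
        rw [ht, zero_mul]
        exact oneVec_rayleigh G hk hreg c)
    have hn : (n:ℝ) ≤ (C.card : ℝ) * ((k+1:ℕ):ℝ)^(2*1+1:ℕ) := by
      have h2 := hCcard
      rw [Finset.card_univ, Fintype.card_fin] at h2
      exact_mod_cast h2
    have hpos : (0:ℝ) < ((k+1:ℕ):ℝ)^(2*1+1:ℕ) := by positivity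
    calc (((k+1:ℕ):ℝ)^(2*1+1:ℕ))⁻¹ * n ≤ (C.card:ℝ) := by
          rw [inv_mul_le_iff₀ hpos]
          linarith
      _ ≤ _ := by exact_mod_cast hvar
  · -- 2 ≤ k
    have hk2' : 2 ≤ k := hk2
    have hkR : (1:ℝ) ≤ (k:ℝ)-1 := by
      have : (2:ℝ) ≤ (k:ℝ) := by exact_mod_cast hk2'
      linarith
    set s : ℝ := Real.sqrt ((k:ℝ)-1) with hs
    have hspos : 0 < s := Real.sqrt_pos.mpr (by linarith)
    set R : ℕ := Nat.ceil (((k:ℝ)-1)/(ε*s)) + 1 with hRdef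
    have hR1 : 1 ≤ R := by omega
    have hRpos : (0:ℝ) < R := by
      have : 0 < R := hR1
      exact_mod_cast this
    have hRb : ((k:ℝ)-1)/(R:ℝ) < ε * s := by
      have hx0 : (0:ℝ) < ε * s := by positivity
      have h0 : ((k:ℝ)-1)/(ε*s) < (R:ℝ) := by
        have h1 : ((k:ℝ)-1)/(ε*s) ≤ (Nat.ceil (((k:ℝ)-1)/(ε*s)) : ℝ) := Nat.le_ceil _
        have h2 : ((Nat.ceil (((k:ℝ)-1)/(ε*s)) : ℕ) : ℝ) < (R:ℝ) := by
          rw [hRdef]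
          push_cast
          linarith
        linarith
      rw [div_lt_iff₀ hRpos]
      have h3 := (div_lt_iff₀ hx0).mp h0
      linarith
    refine ⟨(((k+1:ℕ):ℝ)^(2*R+1:ℕ))⁻¹, by positivity, ?_⟩
    intro n G hdeg
    have hreg := hdegreg n G hdeg
    obtain ⟨C, hCsub, hCfar, hCcard⟩ := exists_packing G hreg (2*R+1) Finset.univ
    have hvar := variational G ((2 - ε) * s) C (fun c => testVec G k R c)
      (fun c hc c' hc' hne => cross_orth G (R := R) _ _
        (testVec_support G k R c) (testVec_support G k R c') (hCfar c hc c' hc' hne))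
      (fun c hc => by
        have h1 := rayleigh_testVec G hk2' hreg c hR1
        have h2 := testVec_norm_pos G hk2' R c
        have h3 : (2 - ε) * s < 2*s - ((k:ℝ)-1)/R := by nlinarith
        calc (2-ε)*s * ∑ u, testVec G k R c u * testVec G k R c u
            < (2*s - ((k:ℝ)-1)/R) * ∑ u, testVec G k R c u * testVec G k R c u :=
              mul_lt_mul_of_pos_right h3 h2
          _ ≤ _ := h1)
    have hn : (n:ℝ) ≤ (C.card : ℝ) * ((k+1:ℕ):ℝ)^(2*R+1:ℕ) := by
      have h2 := hCcard
      rw [Finset.card_univ, Fintype.card_fin] at h2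
      exact_mod_cast h2
    have hpos : (0:ℝ) < ((k+1:ℕ):ℝ)^(2*R+1:ℕ) := by positivity
    calc (((k+1:ℕ):ℝ)^(2*R+1:ℕ))⁻¹ * n ≤ (C.card:ℝ) := by
          rw [inv_mul_le_iff₀ hpos]
          linarith
      _ ≤ _ := by exact_mod_cast hvar
end

section
/- (Hoffman) For any real number λ ∈ (-2, -1], there exists a constant C₁(λ) such that: if G is a finite simple graph with smallest eigenvalue λ_min(G) ≥ λ and minimal valency at least C₁(λ), then λ_min(G) = -1 and G is a disjoint union of cliques (i.e., every connected component of G is a complete graph). -/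
open scoped Classical

set_option linter.unusedSectionVars false
set_option maxHeartbeats 1000000

section Hoffman

variable {V : Type*} [Fintype V]

lemma onb_dot (b : OrthonormalBasis V ℝ (EuclideanSpace ℝ V)) (i j : V) :
    dotProduct (⇑(b i) : V → ℝ) (⇑(b j)) = if i = j then 1 else 0 := by
  have h := orthonormal_iff_ite.1 b.orthonormal i j
  rw [EuclideanSpace.inner_eq_star_dotProduct] at h
  simpa [dotProduct, star, mul_comm] using h

lemma dot_sum_left (f : V → V → ℝ) (w : V → ℝ) :
    dotProduct (∑ i, f i) w = ∑ i, dotProduct (f i) w := by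
  simp only [dotProduct, Finset.sum_apply, Finset.sum_mul]
  exact Finset.sum_comm

lemma dot_sum_right (f : V → V → ℝ) (w : V → ℝ) :
    dotProduct w (∑ i, f i) = ∑ i, dotProduct w (f i) := by
  simp only [dotProduct, Finset.sum_apply, Finset.mul_sum]
  exact Finset.sum_comm

lemma mulVec_sum' (A : Matrix V V ℝ) (f : V → V → ℝ) :
    A.mulVec (∑ i, f i) = ∑ i, A.mulVec (f i) := by
  simp only [← Matrix.mulVecLin_apply]
  exact map_sum A.mulVecLin f Finset.univ

lemma exists_bot_eigen [Nonempty V] (A : Matrix V V ℝ) (hA : A.IsHermitian) :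
    ∃ μ : ℝ, (∃ v : V → ℝ, v ≠ 0 ∧ A.mulVec v = μ • v) ∧
      ∀ w : V → ℝ, μ * (dotProduct w w) ≤ dotProduct w (A.mulVec w) := by
  obtain ⟨i₀, -, hmin⟩ := Finset.exists_min_image Finset.univ hA.eigenvalues
    ⟨Classical.arbitrary V, Finset.mem_univ _⟩
  refine ⟨hA.eigenvalues i₀, ⟨⇑(hA.eigenvectorBasis i₀), ?_, hA.mulVec_eigenvectorBasis i₀⟩, ?_⟩
  · have hne := hA.eigenvectorBasis.orthonormal.ne_zero i₀
    intro h
    apply hne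
    ext x
    exact congrFun h x
  · intro w
    set b := hA.eigenvectorBasis with hb
    set c : V → ℝ := fun i => dotProduct (⇑(b i)) w with hc
    have h2 : ∀ i, (inner ℝ (b i) (WithLp.toLp 2 w : EuclideanSpace ℝ V) : ℝ) = c i := by
      intro i
      rw [EuclideanSpace.inner_eq_star_dotProduct]
      simp [c, dotProduct, star, mul_comm]
    have claim1 : w = ∑ i, c i • (⇑(b i) : V → ℝ) := by
      have h := b.sum_repr' (WithLp.toLp 2 w : EuclideanSpace ℝ V)
      simp_rw [h2] at h
      have h' := congrArg WithLp.ofLp h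
      simpa using h'.symm
    -- compute A *ᵥ w
    have hAw : A.mulVec w = ∑ i, (c i * hA.eigenvalues i) • (⇑(b i) : V → ℝ) := by
      conv_lhs => rw [claim1]
      rw [mulVec_sum']
      simp_rw [Matrix.mulVec_smul]
      refine Finset.sum_congr rfl fun i _ => ?_
      rw [hA.mulVec_eigenvectorBasis i, smul_smul, mul_comm]
    have hQ : dotProduct w (A.mulVec w) = ∑ i, hA.eigenvalues i * (c i)^2 := by
      rw [hAw]
      conv_lhs => rw [claim1]
      rw [dot_sum_right]
      refine Finset.sum_congr rfl fun j _ => ?_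
      rw [dotProduct_smul, dot_sum_left]
      simp_rw [smul_dotProduct, onb_dot]
      simp [Finset.sum_ite_eq, sq]
      ring
    have hN : dotProduct w w = ∑ i, (c i)^2 := by
      conv_lhs => rw [claim1]
      rw [dot_sum_right]
      refine Finset.sum_congr rfl fun j _ => ?_
      rw [dotProduct_smul, dot_sum_left]
      simp_rw [smul_dotProduct, onb_dot]
      simp [Finset.sum_ite_eq, sq]
    rw [hQ, hN, Finset.mul_sum]
    refine Finset.sum_le_sum fun i _ => ?_
    exact mul_le_mul_of_nonneg_right (hmin i (Finset.mem_univ _)) (sq_nonneg _)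

lemma adj_herm (G : SimpleGraph V) : (adjMat G).IsHermitian := by
  show (adjMat G).conjTranspose = adjMat G
  ext i j
  simp only [Matrix.conjTranspose_apply, adjMat, Matrix.of_apply, star_trivial]
  rw [G.adj_comm]

lemma eig_ray {A : Matrix V V ℝ} {v : V → ℝ} {ν : ℝ} (h : A.mulVec v = ν • v) :
    dotProduct v (A.mulVec v) = ν * dotProduct v v := by
  rw [h]
  simp [dotProduct_smul]

lemma dot_self_nonneg (v : V → ℝ) : 0 ≤ dotProduct v v :=
  Finset.sum_nonneg fun i _ => mul_self_nonneg _

lemma dot_self_pos {v : V → ℝ} (hv : v ≠ 0) : 0 < dotProduct v v := by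
  rcases lt_or_eq_of_le (dot_self_nonneg v) with h | h
  · exact h
  · exact absurd ((dotProduct_self_eq_zero).1 h.symm) hv

lemma minEig_spec [Nonempty V] (G : SimpleGraph V) :
    (∃ v : V → ℝ, v ≠ 0 ∧ (adjMat G).mulVec v = (minEig G) • v) ∧
      ∀ w : V → ℝ, minEig G * (dotProduct w w) ≤
        dotProduct w ((adjMat G).mulVec w) := by
  obtain ⟨μ, hmem, hray⟩ := exists_bot_eigen (adjMat G) (adj_herm G)
  have lb : ∀ ν ∈ {μ : ℝ | ∃ v : V → ℝ, v ≠ 0 ∧ (adjMat G).mulVec v = μ • v}, μ ≤ ν := by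
    rintro ν ⟨v, hv, heq⟩
    have h1 := hray v
    rw [eig_ray heq] at h1
    exact le_of_mul_le_mul_right h1 (dot_self_pos hv)
  have hinf : minEig G = μ :=
    le_antisymm (csInf_le ⟨μ, lb⟩ hmem) (le_csInf ⟨μ, hmem⟩ lb)
  rw [hinf]
  exact ⟨hmem, hray⟩

/-- the key contradiction principle -/
lemma key [Nonempty V] {G : SimpleGraph V} {lam : ℝ} (hlam : lam ≤ minEig G)
    (w : V → ℝ) (hw : dotProduct w ((adjMat G).mulVec w) < lam * dotProduct w w) :
    False := by
  have h2 := (minEig_spec G).2 w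
  have h3 : lam * dotProduct w w ≤ minEig G * dotProduct w w := by
    apply mul_le_mul_of_nonneg_right hlam (dot_self_nonneg w)
  linarith

/-- if G is a disjoint union of cliques with an edge, minEig = -1 -/
lemma minEig_unionCliques {G : SimpleGraph V}
    (hcl : ∀ x y : V, G.Reachable x y → x ≠ y → G.Adj x y)
    {u v : V} (huv : G.Adj u v) : minEig G = -1 := by
  set S := {μ : ℝ | ∃ w : V → ℝ, w ≠ 0 ∧ (adjMat G).mulVec w = μ • w} with hS
  have hmem : (-1 : ℝ) ∈ S := by
    refine ⟨Pi.single u 1 - Pi.single v 1, ?_, ?_⟩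
    · intro h
      have := congrFun h u
      simp [Pi.single_apply, (G.ne_of_adj huv)] at this
    · rw [Matrix.mulVec_sub, Matrix.mulVec_single_one, Matrix.mulVec_single_one]
      funext i
      have hiu : adjMat G i u = if G.Adj i u then 1 else 0 := rfl
      have hiv : adjMat G i v = if G.Adj i v then 1 else 0 := rfl
      simp only [Pi.sub_apply, Pi.smul_apply, Pi.single_apply, smul_eq_mul, mul_one, Matrix.col_apply, hiu, hiv]
      by_cases h1 : i = u
      · subst h1
        simp [G.irrefl, huv, (G.ne_of_adj huv)]
      · by_cases h2 : i = v
        · subst h2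
          simp [G.irrefl, huv.symm, h1]
        · have hadj : G.Adj i u ↔ G.Adj i v := by
            constructor
            · intro h
              exact hcl i v (h.reachable.trans huv.reachable) h2
            · intro h
              exact hcl i u (h.reachable.trans huv.symm.reachable) h1
          simp only [if_neg h1, if_neg h2]
          by_cases h3 : G.Adj i u
          · rw [if_pos h3, if_pos (hadj.1 h3)]; ring
          · rw [if_neg h3, if_neg (fun h => h3 (hadj.2 h))]; ring
  have lb : ∀ ν ∈ S, (-1 : ℝ) ≤ ν := by
    rintro ν ⟨w, hw, heq⟩
    obtain ⟨i, hi⟩ := Function.ne_iff.1 hw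
    have hi' : w i ≠ 0 := hi
    set comp := Finset.univ.filter (fun k => G.Reachable i k) with hcomp
    have hicomp : i ∈ comp := by
      simp only [hcomp, Finset.mem_filter, Finset.mem_univ, true_and]
      exact SimpleGraph.Reachable.refl i
    set s := ∑ k ∈ comp, w k with hs
    have claim : ∀ j ∈ comp, ν * w j = s - w j := by
      intro j hj
      have hj' : G.Reachable i j := by
        simp only [hcomp, Finset.mem_filter] at hj
        exact hj.2
      have e1 : ((adjMat G).mulVec w) j = ν * w j := by
        rw [heq]; simp
      have e2 : ((adjMat G).mulVec w) j = ∑ k ∈ comp.erase j, w k := by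
        show dotProduct (adjMat G j) w = _
        unfold dotProduct
        have : ∀ k, adjMat G j k * w k = if k ∈ comp.erase j then w k else 0 := by
          intro k
          have hjk : adjMat G j k = if G.Adj j k then 1 else 0 := rfl
          have hmemiff : G.Adj j k ↔ k ∈ comp.erase j := by
            constructor
            · intro h
              simp only [Finset.mem_erase, hcomp, Finset.mem_filter, Finset.mem_univ, true_and]
              exact ⟨(G.ne_of_adj h).symm, hj'.trans h.reachable⟩
            · intro h
              simp only [Finset.mem_erase, hcomp, Finset.mem_filter, Finset.mem_univ, true_and]
                at h
              exact hcl j k (hj'.symm.trans h.2) (fun hh => h.1 hh.symm)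
          rw [hjk]
          by_cases h : G.Adj j k
          · rw [if_pos h, if_pos (hmemiff.1 h), one_mul]
          · rw [if_neg h, if_neg (fun hh => h (hmemiff.2 hh)), zero_mul]
        rw [Finset.sum_congr rfl (fun k _ => this k)]
        rw [Finset.sum_ite_mem]
        congr 1
        exact Finset.univ_inter _
      rw [← e1, e2, Finset.sum_erase_eq_sub hj]
    by_cases hs0 : s = 0
    · have := claim i hicomp
      rw [hs0, zero_sub] at this
      have h0 : (ν + 1) * w i = 0 := by linarith
      rcases mul_eq_zero.1 h0 with h | h
      · linarith
      · exact absurd h hi'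
    · have hsum : ν * s = (comp.card : ℝ) * s - s := by
        rw [hs, Finset.mul_sum]
        rw [Finset.sum_congr rfl claim]
        rw [Finset.sum_sub_distrib]
        simp [Finset.sum_const, ← hs]
      have hcard : (1 : ℝ) ≤ comp.card := by
        have : 0 < comp.card := Finset.card_pos.2 ⟨i, hicomp⟩
        exact_mod_cast this
      have h0 : (ν - ((comp.card : ℝ) - 1)) * s = 0 := by ring_nf; nlinarith [hsum]
      rcases mul_eq_zero.1 h0 with h | h
      · linarith
      · exact absurd h hs0
  exact le_antisymm (csInf_le ⟨-1, lb⟩ hmem) (le_csInf ⟨_, hmem⟩ lb)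

/-- number of ordered adjacent pairs between S and T -/
noncomputable def eAdj (G : SimpleGraph V) (S T : Finset V) : ℝ :=
  ∑ i ∈ S, ∑ j ∈ T, (if G.Adj i j then (1 : ℝ) else 0)

lemma eAdj_nonneg (G : SimpleGraph V) (S T : Finset V) : 0 ≤ eAdj G S T := by
  refine Finset.sum_nonneg fun i _ => Finset.sum_nonneg fun j _ => ?_
  positivity

lemma eAdj_le (G : SimpleGraph V) (S T : Finset V) :
    eAdj G S T ≤ (S.card : ℝ) * T.card := by
  unfold eAdj
  calc ∑ i ∈ S, ∑ j ∈ T, (if G.Adj i j then (1:ℝ) else 0)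
      ≤ ∑ i ∈ S, ∑ j ∈ T, (1:ℝ) := by
        refine Finset.sum_le_sum fun i _ => Finset.sum_le_sum fun j _ => ?_
        split <;> norm_num
    _ = (S.card : ℝ) * T.card := by simp [mul_comm]

lemma eAdj_zero {G : SimpleGraph V} {S T : Finset V}
    (h : ∀ i ∈ S, ∀ j ∈ T, ¬G.Adj i j) : eAdj G S T = 0 := by
  unfold eAdj
  refine Finset.sum_eq_zero fun i hi => Finset.sum_eq_zero fun j hj => ?_
  rw [if_neg (h i hi j hj)]

lemma eAdj_full {G : SimpleGraph V} {S T : Finset V}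
    (h : ∀ i ∈ S, ∀ j ∈ T, G.Adj i j) : eAdj G S T = (S.card : ℝ) * T.card := by
  unfold eAdj
  rw [Finset.sum_congr rfl fun i hi => Finset.sum_congr rfl fun j hj => if_pos (h i hi j hj)]
  simp [mul_comm]

lemma eAdj_clique {G : SimpleGraph V} {S : Finset V} (h : G.IsClique S) :
    eAdj G S S = (S.card : ℝ) * S.card - S.card := by
  unfold eAdj
  have : ∀ i ∈ S, ∑ j ∈ S, (if G.Adj i j then (1:ℝ) else 0) = (S.card : ℝ) - 1 := by
    intro i hi
    have : ∀ j ∈ S, (if G.Adj i j then (1:ℝ) else 0) = if j ∈ S.erase i then 1 else 0 := by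
      intro j hj
      by_cases hij : j = i
      · subst hij
        simp [G.irrefl]
      · rw [if_pos (h hi hj (fun hh => hij hh.symm)), if_pos (Finset.mem_erase.2 ⟨hij, hj⟩)]
    rw [Finset.sum_congr rfl this, Finset.sum_ite_mem, Finset.inter_comm,
      Finset.inter_eq_left.2 (Finset.erase_subset _ _)]
    simp [Finset.card_erase_of_mem hi]
    have : 1 ≤ S.card := Finset.card_pos.2 ⟨i, hi⟩
    push_cast [Nat.cast_sub this]
    ring
  rw [Finset.sum_congr rfl this]
  simp
lemma eAdj_sparse {G : SimpleGraph V} {S T : Finset V} {r : ℕ}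
    (h : ∀ j ∈ T, ((S.filter (fun i => G.Adj i j)).card ≤ r)) :
    eAdj G S T ≤ (r : ℝ) * T.card := by
  unfold eAdj
  rw [Finset.sum_comm]
  calc ∑ j ∈ T, ∑ i ∈ S, (if G.Adj i j then (1:ℝ) else 0)
      ≤ ∑ j ∈ T, (r : ℝ) := by
        refine Finset.sum_le_sum fun j hj => ?_
        have hsb : ∑ i ∈ S, (if G.Adj i j then (1:ℝ) else 0)
            = ((S.filter (fun i => G.Adj i j)).card : ℝ) := by
          rw [Finset.sum_boole]
        rw [hsb]
        exact_mod_cast h j hj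
    _ = (r : ℝ) * T.card := by simp [mul_comm]

lemma sum_boole_mul (S : Finset V) (f : V → ℝ) :
    ∑ i, (if i ∈ S then (1:ℝ) else 0) * f i = ∑ i ∈ S, f i := by
  simp_rw [boole_mul]
  rw [Finset.sum_ite_mem, Finset.univ_inter]

/-- master expansion of the quadratic form for a vector built from weighted parts -/
lemma quadform {t : ℕ} (G : SimpleGraph V) (P : Fin t → Finset V) (c : Fin t → ℝ) :
    dotProduct (fun i => ∑ a, if i ∈ P a then c a else 0)
      ((adjMat G).mulVec (fun i => ∑ a, if i ∈ P a then c a else 0)) =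
    ∑ a, ∑ b, c a * c b * eAdj G (P a) (P b) := by
  set w : V → ℝ := fun i => ∑ a, if i ∈ P a then c a else 0 with hw
  have lhs_eq : dotProduct w ((adjMat G).mulVec w)
      = ∑ i, ∑ j, w i * w j * (if G.Adj i j then (1:ℝ) else 0) := by
    unfold dotProduct Matrix.mulVec dotProduct
    refine Finset.sum_congr rfl fun i _ => ?_
    rw [Finset.mul_sum]
    refine Finset.sum_congr rfl fun j _ => ?_
    show w i * (adjMat G i j * w j) = _
    have : adjMat G i j = if G.Adj i j then (1:ℝ) else 0 := rfl
    rw [this]; ring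
  rw [lhs_eq]
  have term_eq : ∀ i j, w i * w j * (if G.Adj i j then (1:ℝ) else 0)
      = ∑ a, ∑ b, (if i ∈ P a then (1:ℝ) else 0) *
          ((if j ∈ P b then (1:ℝ) else 0) * (c a * c b * (if G.Adj i j then (1:ℝ) else 0))) := by
    intro i j
    rw [hw]
    simp only
    rw [Finset.sum_mul_sum]
    rw [Finset.sum_mul]
    refine Finset.sum_congr rfl fun a _ => ?_
    rw [Finset.sum_mul]
    refine Finset.sum_congr rfl fun b _ => ?_
    split_ifs <;> ring
  rw [Finset.sum_congr rfl fun i _ => Finset.sum_congr rfl fun j _ => term_eq i j]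
  rw [Finset.sum_congr rfl fun i (_ : i ∈ (Finset.univ : Finset V)) => Finset.sum_comm]
  rw [Finset.sum_comm]
  refine Finset.sum_congr rfl fun a _ => ?_
  rw [Finset.sum_congr rfl fun i (_ : i ∈ (Finset.univ : Finset V)) => Finset.sum_comm]
  rw [Finset.sum_comm]
  refine Finset.sum_congr rfl fun b _ => ?_
  have inner_eq : ∀ i : V, (∑ j, (if i ∈ P a then (1:ℝ) else 0) *
      ((if j ∈ P b then (1:ℝ) else 0) * (c a * c b * (if G.Adj i j then (1:ℝ) else 0))))
      = (if i ∈ P a then (1:ℝ) else 0) *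
        (∑ j ∈ P b, c a * c b * (if G.Adj i j then (1:ℝ) else 0)) := by
    intro i
    rw [← Finset.mul_sum, sum_boole_mul]
  rw [Finset.sum_congr rfl fun i _ => inner_eq i, sum_boole_mul]
  unfold eAdj
  rw [Finset.mul_sum]
  refine Finset.sum_congr rfl fun i _ => ?_
  rw [Finset.mul_sum]

lemma normform {t : ℕ} (P : Fin t → Finset V) (c : Fin t → ℝ)
    (hdisj : ∀ a b, a ≠ b → Disjoint (P a) (P b)) :
    dotProduct (fun i => ∑ a, if i ∈ P a then c a else 0)
      (fun i => ∑ a, if i ∈ P a then c a else 0) = ∑ a, c a ^ 2 * (P a).card := by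
  set w : V → ℝ := fun i => ∑ a, if i ∈ P a then c a else 0 with hw
  unfold dotProduct
  have hterm : ∀ i, w i * w i = ∑ a, (if i ∈ P a then c a ^ 2 else 0) := by
    intro i
    rw [hw]
    simp only
    rw [Finset.sum_mul_sum]
    refine Finset.sum_congr rfl fun a _ => ?_
    rw [Finset.sum_eq_single a]
    · split_ifs with h
      · ring
      · ring
    · intro b _ hba
      by_cases hia : i ∈ P a
      · have : i ∉ P b := fun hib => (Finset.disjoint_left.1 (hdisj b a hba) hib) hia
        simp [this]
      · simp [hia]
    · intro h
      exact absurd (Finset.mem_univ a) h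
  rw [Finset.sum_congr rfl fun i _ => hterm i, Finset.sum_comm]
  refine Finset.sum_congr rfl fun a _ => ?_
  rw [Finset.sum_ite_mem]
  simp [Finset.sum_const, mul_comm]

def RB : ℕ → ℕ → ℕ
  | 0, _ => 1
  | _ + 1, 0 => 0
  | t + 1, k + 1 => RB (t + 1) k + RB t (k + 1) + 1

lemma ramsey (G : SimpleGraph V) (t k : ℕ) (S : Finset V)
    (hind : ∀ I ⊆ S, (∀ i ∈ I, ∀ j ∈ I, i ≠ j → ¬G.Adj i j) → I.card ≤ t)
    (hcard : RB t k ≤ S.card) :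
    ∃ K ⊆ S, K.card = k ∧ (∀ i ∈ K, ∀ j ∈ K, i ≠ j → G.Adj i j) := by
  induction t generalizing k S with
  | zero =>
    exfalso
    have h0 : RB 0 k = 1 := by rw [RB]
    rw [h0] at hcard
    have h1 : 1 ≤ S.card := hcard
    obtain ⟨v, hv⟩ := Finset.card_pos.1 h1
    have := hind {v} (Finset.singleton_subset_iff.2 hv) (by
      intro i hi j hj hij
      rw [Finset.mem_singleton] at hi hj
      exact absurd (hi.trans hj.symm) hij)
    simp at this
  | succ t iht =>
    induction k generalizing S with
    | zero => exact ⟨∅, Finset.empty_subset _, Finset.card_empty, by simp⟩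
    | succ k ihk =>
      have hrb0 : RB (t+1) (k+1) = RB (t+1) k + RB t (k+1) + 1 := by rw [RB]
      have hpos : 0 < S.card := by omega
      obtain ⟨v, hv⟩ := Finset.card_pos.1 hpos
      set S₁ := S.filter (fun u => G.Adj v u) with hS₁
      set S₂ := (S.erase v).filter (fun u => ¬G.Adj v u) with hS₂
      have hsplit : S.card ≤ S₁.card + S₂.card + 1 := by
        have : S ⊆ insert v (S₁ ∪ S₂) := by
          intro u hu
          by_cases huv : u = v
          · exact Finset.mem_insert.2 (Or.inl huv)
          · rw [Finset.mem_insert]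
            right
            rw [Finset.mem_union]
            by_cases hadj : G.Adj v u
            · exact Or.inl (Finset.mem_filter.2 ⟨hu, hadj⟩)
            · exact Or.inr (Finset.mem_filter.2 ⟨Finset.mem_erase.2 ⟨huv, hu⟩, hadj⟩)
        calc S.card ≤ (insert v (S₁ ∪ S₂)).card := Finset.card_le_card this
          _ ≤ (S₁ ∪ S₂).card + 1 := Finset.card_insert_le _ _
          _ ≤ S₁.card + S₂.card + 1 := by
              have := Finset.card_union_le S₁ S₂
              omega
      by_cases hbig : RB t (k+1) ≤ S₂.card
      · -- independent sets in S₂ extend by v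
        have hS₂sub : S₂ ⊆ S := fun u hu =>
          Finset.mem_of_mem_erase (Finset.mem_of_mem_filter _ hu)
        refine iht (k+1) S₂ ?_ hbig |>.imp fun K hK => ⟨hK.1.trans hS₂sub, hK.2⟩
        intro I hI hIind
        have hvI : v ∉ I := by
          intro hvI
          have := Finset.mem_erase.1 (Finset.mem_of_mem_filter _ (hI hvI))
          exact this.1 rfl
        have := hind (insert v I) ?_ ?_
        · rw [Finset.card_insert_of_notMem hvI] at this
          omega
        · intro u hu
          rcases Finset.mem_insert.1 hu with h | h
          · exact h ▸ hv
          · exact hS₂sub (hI h)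
        · intro i hi j hj hij
          rcases Finset.mem_insert.1 hi with h | h
          · subst h
            rcases Finset.mem_insert.1 hj with h' | h'
            · exact absurd h'.symm hij
            · exact (Finset.mem_filter.1 (hI h')).2
          · rcases Finset.mem_insert.1 hj with h' | h'
            · subst h'
              intro hadj
              exact (Finset.mem_filter.1 (hI h)).2 hadj.symm
            · exact hIind i h j h' hij
      · -- S₁ is big
        have hS₁big : RB (t+1) k ≤ S₁.card := by
          omega
        have hS₁sub : S₁ ⊆ S := Finset.filter_subset _ _
        obtain ⟨K, hKsub, hKcard, hKcl⟩ := ihk S₁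
          (fun I hI hind' => hind I (hI.trans hS₁sub) hind') hS₁big
        have hvK : v ∉ K := by
          intro hvK
          exact G.irrefl (Finset.mem_filter.1 (hKsub hvK)).2
        refine ⟨insert v K, ?_, ?_, ?_⟩
        · intro u hu
          rcases Finset.mem_insert.1 hu with h | h
          · exact h ▸ hv
          · exact hS₁sub (hKsub h)
        · rw [Finset.card_insert_of_notMem hvK, hKcard]
        · intro i hi j hj hij
          rcases Finset.mem_insert.1 hi with h | h
          · subst h
            rcases Finset.mem_insert.1 hj with h' | h'
            · exact absurd h'.symm hij
            · exact (Finset.mem_filter.1 (hKsub h')).2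
          · rcases Finset.mem_insert.1 hj with h' | h'
            · subst h'
              exact ((Finset.mem_filter.1 (hKsub h)).2).symm
            · exact hKcl i h j h' hij

/-- Gadget V0: an independent 4-set in a neighbourhood -/
lemma gadgetV0 {G : SimpleGraph V} {lam : ℝ} (h1 : -2 < lam) {y : V} {I : Finset V}
    (hIcard : I.card = 4) (hIN : ∀ j ∈ I, G.Adj y j)
    (hIind : ∀ i ∈ I, ∀ j ∈ I, i ≠ j → ¬G.Adj i j) :
    ∃ w : V → ℝ, dotProduct w ((adjMat G).mulVec w) < lam * dotProduct w w := by
  have hyI : y ∉ I := fun h => G.irrefl (hIN y h)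
  set P : Fin 2 → Finset V := ![{y}, I] with hP
  set c : Fin 2 → ℝ := ![2, -1] with hc
  refine ⟨fun i => ∑ a, if i ∈ P a then c a else 0, ?_⟩
  rw [quadform, normform]
  · have e00 : eAdj G {y} {y} = 0 := eAdj_zero (by simp)
    have e01 : eAdj G {y} I = 4 := by
      rw [eAdj_full (by simpa using hIN)]
      simp [hIcard]
    have e10 : eAdj G I {y} = 4 := by
      have hfull : ∀ i ∈ I, ∀ j ∈ ({y} : Finset V), G.Adj i j := by
        intro i hi j hj
        rw [Finset.mem_singleton] at hj
        subst hj
        exact (hIN i hi).symm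
      rw [eAdj_full hfull]
      simp [hIcard]
    have e11 : eAdj G I I = 0 := by
      refine eAdj_zero ?_
      intro i hi j hj
      by_cases hij : i = j
      · subst hij; exact G.irrefl
      · exact hIind i hi j hj hij
    simp only [Fin.sum_univ_two, hP, hc, Matrix.cons_val_zero, Matrix.cons_val_one,
      Matrix.head_cons, Finset.card_singleton, hIcard, e00, e01, e10, e11]
    push_cast
    nlinarith
  · intro a b hab
    fin_cases a <;> fin_cases b <;>
      simp only [hP, Matrix.cons_val_zero, Matrix.cons_val_one, Matrix.head_cons] <;>
      first
        | exact (hab rfl).elim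
        | exact Finset.disjoint_singleton_left.2 hyI
        | exact Finset.disjoint_singleton_right.2 hyI

lemma eAdj_symm (G : SimpleGraph V) (S T : Finset V) : eAdj G S T = eAdj G T S := by
  unfold eAdj
  rw [Finset.sum_comm]
  refine Finset.sum_congr rfl fun j _ => Finset.sum_congr rfl fun i _ => ?_
  by_cases h : G.Adj i j
  · rw [if_pos h, if_pos h.symm]
  · rw [if_neg h, if_neg (fun hh => h hh.symm)]

/-- Gadget V1: clique joined completely to two nonadjacent vertices -/
lemma gadgetV1 {G : SimpleGraph V} {lam : ℝ} {x z : V} {K : Finset V}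
    (hxz : ¬G.Adj x z) (hne : x ≠ z)
    (hKcl : ∀ i ∈ K, ∀ j ∈ K, i ≠ j → G.Adj i j)
    (hKx : ∀ j ∈ K, G.Adj x j) (hKz : ∀ j ∈ K, G.Adj z j)
    (hk1 : 1 ≤ K.card) (hcond : 2 < (lam + 2) * ((K.card : ℝ) + 2)) :
    ∃ w : V → ℝ, dotProduct w ((adjMat G).mulVec w) < lam * dotProduct w w := by
  have hxK : x ∉ K := fun h => G.irrefl (hKx x h)
  have hzK : z ∉ K := fun h => G.irrefl (hKz z h)
  set P : Fin 3 → Finset V := ![{x}, {z}, K] with hP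
  set c : Fin 3 → ℝ := ![(K.card : ℝ), (K.card : ℝ), -2] with hc
  refine ⟨fun i => ∑ a, if i ∈ P a then c a else 0, ?_⟩
  rw [quadform, normform]
  · have e00 : eAdj G {x} {x} = 0 := eAdj_zero (by simp)
    have e11 : eAdj G {z} {z} = 0 := eAdj_zero (by simp)
    have e01 : eAdj G {x} {z} = 0 := eAdj_zero (by simpa using hxz)
    have e10 : eAdj G {z} {x} = 0 := eAdj_zero (by simp; exact fun h => hxz h.symm)
    have e02 : eAdj G {x} K = (K.card : ℝ) := by
      rw [eAdj_full (by simpa using hKx)]; simp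
    have e20 : eAdj G K {x} = (K.card : ℝ) := by rw [eAdj_symm]; exact e02
    have e12 : eAdj G {z} K = (K.card : ℝ) := by
      rw [eAdj_full (by simpa using hKz)]; simp
    have e21 : eAdj G K {z} = (K.card : ℝ) := by rw [eAdj_symm]; exact e12
    have e22 : eAdj G K K = (K.card : ℝ) * K.card - K.card := eAdj_clique hKcl
    simp only [Fin.sum_univ_three, hP, hc, Matrix.cons_val_zero, Matrix.cons_val_one,
      Matrix.head_cons, Matrix.cons_val_two, Matrix.tail_cons, Finset.card_singleton,
      e00, e01, e02, e10, e11, e12, e20, e21, e22]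
    have hk1' : (1 : ℝ) ≤ (K.card : ℝ) := by exact_mod_cast hk1
    push_cast
    nlinarith [mul_pos (show (0:ℝ) < 2 * (K.card : ℝ) by linarith)
      (show 0 < (lam + 2) * ((K.card : ℝ) + 2) - 2 by linarith)]
  · intro a b hab
    have hd1 : Disjoint ({x} : Finset V) {z} := by
      simp only [Finset.disjoint_singleton_left, Finset.mem_singleton]
      exact hne
    have hd2 : Disjoint ({x} : Finset V) K := Finset.disjoint_singleton_left.2 hxK
    have hd3 : Disjoint ({z} : Finset V) K := Finset.disjoint_singleton_left.2 hzK
    fin_cases a <;> fin_cases b <;>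
      simp only [hP, Matrix.cons_val_zero, Matrix.cons_val_one, Matrix.head_cons,
        Matrix.cons_val_two, Matrix.tail_cons] <;>
      first
        | exact (hab rfl).elim
        | exact hd1 | exact hd1.symm | exact hd2 | exact hd2.symm
        | exact hd3 | exact hd3.symm

/-- Gadget V2: two 3-cliques inside a common clique, attached to x resp. z -/
lemma gadgetV2 {G : SimpleGraph V} {lam : ℝ} (h1 : -2 < lam) {x z : V} {K₁ K₂ : Finset V}
    (hxz : ¬G.Adj x z) (hne : x ≠ z)
    (hc1 : K₁.card = 3) (hc2 : K₂.card = 3)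
    (hK₁cl : ∀ i ∈ K₁, ∀ j ∈ K₁, i ≠ j → G.Adj i j)
    (hK₂cl : ∀ i ∈ K₂, ∀ j ∈ K₂, i ≠ j → G.Adj i j)
    (hK₁x : ∀ j ∈ K₁, G.Adj x j) (hK₂z : ∀ j ∈ K₂, G.Adj z j)
    (hK₁z : ∀ j ∈ K₁, ¬G.Adj z j) (hK₂x : ∀ j ∈ K₂, ¬G.Adj x j)
    (hcross : ∀ i ∈ K₁, ∀ j ∈ K₂, G.Adj i j) :
    ∃ w : V → ℝ, dotProduct w ((adjMat G).mulVec w) < lam * dotProduct w w := by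
  have hxK₁ : x ∉ K₁ := fun h => G.irrefl (hK₁x x h)
  have hzK₂ : z ∉ K₂ := fun h => G.irrefl (hK₂z z h)
  have hxK₂ : x ∉ K₂ := fun h => hxz ((hK₂z x h).symm)
  have hzK₁ : z ∉ K₁ := fun h => hxz (hK₁x z h)
  have hK₁K₂ : Disjoint K₁ K₂ := by
    rw [Finset.disjoint_left]
    intro u hu1 hu2
    exact G.irrefl (hcross u hu1 u hu2)
  set P : Fin 4 → Finset V := ![{x}, {z}, K₁, K₂] with hP
  set c : Fin 4 → ℝ := ![1, -1, -1, 1] with hc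
  refine ⟨fun i => ∑ a, if i ∈ P a then c a else 0, ?_⟩
  rw [quadform, normform]
  · have e00 : eAdj G {x} {x} = 0 := eAdj_zero (by simp)
    have e11 : eAdj G {z} {z} = 0 := eAdj_zero (by simp)
    have e01 : eAdj G {x} {z} = 0 := eAdj_zero (by simpa using hxz)
    have e10 : eAdj G {z} {x} = 0 := eAdj_zero (by simp; exact fun h => hxz h.symm)
    have e02 : eAdj G {x} K₁ = 3 := by
      rw [eAdj_full (by simpa using hK₁x)]; simp [hc1]
    have e20 : eAdj G K₁ {x} = 3 := by rw [eAdj_symm]; exact e02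
    have e13 : eAdj G {z} K₂ = 3 := by
      rw [eAdj_full (by simpa using hK₂z)]; simp [hc2]
    have e31 : eAdj G K₂ {z} = 3 := by rw [eAdj_symm]; exact e13
    have e03 : eAdj G {x} K₂ = 0 := eAdj_zero (by simpa using hK₂x)
    have e30 : eAdj G K₂ {x} = 0 := by rw [eAdj_symm]; exact e03
    have e12 : eAdj G {z} K₁ = 0 := eAdj_zero (by simpa using hK₁z)
    have e21 : eAdj G K₁ {z} = 0 := by rw [eAdj_symm]; exact e12
    have e22 : eAdj G K₁ K₁ = 3 * 3 - 3 := by rw [eAdj_clique hK₁cl, hc1]; norm_num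
    have e33 : eAdj G K₂ K₂ = 3 * 3 - 3 := by rw [eAdj_clique hK₂cl, hc2]; norm_num
    have e23 : eAdj G K₁ K₂ = 9 := by
      rw [eAdj_full hcross, hc1, hc2]; norm_num
    have e32 : eAdj G K₂ K₁ = 9 := by rw [eAdj_symm]; exact e23
    simp only [Fin.sum_univ_four, hP, hc, Matrix.cons_val_zero, Matrix.cons_val_one,
      Matrix.head_cons, Matrix.cons_val_two, Matrix.tail_cons, Matrix.cons_val_three,
      Finset.card_singleton, hc1, hc2,
      e00, e01, e02, e03, e10, e11, e12, e13, e20, e21, e22, e23, e30, e31, e32, e33]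
    push_cast
    nlinarith
  · intro a b hab
    have hd1 : Disjoint ({x} : Finset V) {z} := by
      simp only [Finset.disjoint_singleton_left, Finset.mem_singleton]
      exact hne
    have hd2 : Disjoint ({x} : Finset V) K₁ := Finset.disjoint_singleton_left.2 hxK₁
    have hd3 : Disjoint ({x} : Finset V) K₂ := Finset.disjoint_singleton_left.2 hxK₂
    have hd4 : Disjoint ({z} : Finset V) K₁ := Finset.disjoint_singleton_left.2 hzK₁
    have hd5 : Disjoint ({z} : Finset V) K₂ := Finset.disjoint_singleton_left.2 hzK₂
    fin_cases a <;> fin_cases b <;>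
      simp only [hP, Matrix.cons_val_zero, Matrix.cons_val_one, Matrix.head_cons,
        Matrix.cons_val_two, Matrix.tail_cons, Matrix.cons_val_three] <;>
      first
        | exact (hab rfl).elim
        | exact hd1 | exact hd1.symm | exact hd2 | exact hd2.symm
        | exact hd3 | exact hd3.symm | exact hd4 | exact hd4.symm
        | exact hd5 | exact hd5.symm | exact hK₁K₂ | exact hK₁K₂.symm

/-- Gadget V3: vertex y with two p-cliques in its neighbourhood with few cross edges -/
lemma gadgetV3 {G : SimpleGraph V} {lam : ℝ} {y : V} {L K : Finset V} {p r : ℕ}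
    (hpL : L.card = p) (hpK : K.card = p) (hp1 : 1 ≤ p)
    (hyL : ∀ j ∈ L, G.Adj y j) (hyK : ∀ j ∈ K, G.Adj y j)
    (hLcl : ∀ i ∈ L, ∀ j ∈ L, i ≠ j → G.Adj i j)
    (hKcl : ∀ i ∈ K, ∀ j ∈ K, i ≠ j → G.Adj i j)
    (hLK : Disjoint L K)
    (hsp : ∀ j ∈ K, ((L.filter (fun i => G.Adj i j)).card ≤ r))
    (hcond : 2 * (1 + (r : ℝ)) < (lam + 2) * ((p : ℝ) + 2)) :
    ∃ w : V → ℝ, dotProduct w ((adjMat G).mulVec w) < lam * dotProduct w w := by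
  have hyLm : y ∉ L := fun h => G.irrefl (hyL y h)
  have hyKm : y ∉ K := fun h => G.irrefl (hyK y h)
  set P : Fin 3 → Finset V := ![{y}, L, K] with hP
  set c : Fin 3 → ℝ := ![(p : ℝ), -1, -1] with hc
  refine ⟨fun i => ∑ a, if i ∈ P a then c a else 0, ?_⟩
  rw [quadform, normform]
  · have e00 : eAdj G {y} {y} = 0 := eAdj_zero (by simp)
    have e01 : eAdj G {y} L = p := by
      rw [eAdj_full (by simpa using hyL)]; simp [hpL]
    have e10 : eAdj G L {y} = p := by rw [eAdj_symm]; exact e01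
    have e02 : eAdj G {y} K = p := by
      rw [eAdj_full (by simpa using hyK)]; simp [hpK]
    have e20 : eAdj G K {y} = p := by rw [eAdj_symm]; exact e02
    have e11 : eAdj G L L = (p : ℝ) * p - p := by rw [eAdj_clique hLcl, hpL]
    have e22 : eAdj G K K = (p : ℝ) * p - p := by rw [eAdj_clique hKcl, hpK]
    have e12 : eAdj G L K ≤ (r : ℝ) * p := by
      have := eAdj_sparse hsp
      rwa [hpK] at this
    have e21 : eAdj G K L ≤ (r : ℝ) * p := by rw [eAdj_symm]; exact e12
    simp only [Fin.sum_univ_three, hP, hc, Matrix.cons_val_zero, Matrix.cons_val_one,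
      Matrix.head_cons, Matrix.cons_val_two, Matrix.tail_cons, Finset.card_singleton,
      hpL, hpK, e00, e01, e02, e10, e11, e20, e22]
    have hp1' : (1 : ℝ) ≤ (p : ℝ) := by exact_mod_cast hp1
    push_cast
    nlinarith [e12, e21, mul_pos (show (0:ℝ) < (p:ℝ) by linarith)
      (show 0 < (lam + 2) * ((p:ℝ) + 2) - 2 * (1 + (r:ℝ)) by linarith)]
  · intro a b hab
    have hd1 : Disjoint ({y} : Finset V) L := Finset.disjoint_singleton_left.2 hyLm
    have hd2 : Disjoint ({y} : Finset V) K := Finset.disjoint_singleton_left.2 hyKm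
    fin_cases a <;> fin_cases b <;>
      simp only [hP, Matrix.cons_val_zero, Matrix.cons_val_one, Matrix.head_cons,
        Matrix.cons_val_two, Matrix.tail_cons] <;>
      first
        | exact (hab rfl).elim
        | exact hd1 | exact hd1.symm | exact hd2 | exact hd2.symm
        | exact hLK | exact hLK.symm

/-- Gadget V4: an edge x~y with a p-clique hanging on each side -/
lemma gadgetV4 {G : SimpleGraph V} {lam : ℝ} {x y : V} {L K : Finset V} {p : ℕ}
    (hxy : G.Adj x y)
    (hpL : L.card = p) (hpK : K.card = p) (hp1 : 1 ≤ p)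
    (hxL : ∀ j ∈ L, G.Adj x j) (hyK : ∀ j ∈ K, G.Adj y j)
    (hxK : ∀ j ∈ K, ¬G.Adj x j) (hyL : ∀ j ∈ L, ¬G.Adj y j)
    (hxnK : x ∉ K) (hynL : y ∉ L)
    (hLcl : ∀ i ∈ L, ∀ j ∈ L, i ≠ j → G.Adj i j)
    (hKcl : ∀ i ∈ K, ∀ j ∈ K, i ≠ j → G.Adj i j)
    (hcond : 1 < (lam + 2) * ((p : ℝ) + 1)) :
    ∃ w : V → ℝ, dotProduct w ((adjMat G).mulVec w) < lam * dotProduct w w := by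
  have hxnL : x ∉ L := fun h => G.irrefl (hxL x h)
  have hynK : y ∉ K := fun h => G.irrefl (hyK y h)
  have hLK : Disjoint L K := by
    rw [Finset.disjoint_left]
    intro u hu1 hu2
    exact hxK u hu2 (hxL u hu1)
  set P : Fin 4 → Finset V := ![{x}, {y}, L, K] with hP
  set c : Fin 4 → ℝ := ![(p : ℝ), -(p : ℝ), -1, 1] with hc
  refine ⟨fun i => ∑ a, if i ∈ P a then c a else 0, ?_⟩
  rw [quadform, normform]
  · have e00 : eAdj G {x} {x} = 0 := eAdj_zero (by simp)
    have e11 : eAdj G {y} {y} = 0 := eAdj_zero (by simp)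
    have e01 : eAdj G {x} {y} = 1 := by
      rw [eAdj_full (by simpa using hxy)]; simp
    have e10 : eAdj G {y} {x} = 1 := by rw [eAdj_symm]; exact e01
    have e02 : eAdj G {x} L = p := by
      rw [eAdj_full (by simpa using hxL)]; simp [hpL]
    have e20 : eAdj G L {x} = p := by rw [eAdj_symm]; exact e02
    have e13 : eAdj G {y} K = p := by
      rw [eAdj_full (by simpa using hyK)]; simp [hpK]
    have e31 : eAdj G K {y} = p := by rw [eAdj_symm]; exact e13
    have e03 : eAdj G {x} K = 0 := eAdj_zero (by simpa using hxK)
    have e30 : eAdj G K {x} = 0 := by rw [eAdj_symm]; exact e03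
    have e12 : eAdj G {y} L = 0 := eAdj_zero (by simpa using hyL)
    have e21 : eAdj G L {y} = 0 := by rw [eAdj_symm]; exact e12
    have e22 : eAdj G L L = (p : ℝ) * p - p := by rw [eAdj_clique hLcl, hpL]
    have e33 : eAdj G K K = (p : ℝ) * p - p := by rw [eAdj_clique hKcl, hpK]
    have e23 : 0 ≤ eAdj G L K := eAdj_nonneg G L K
    have e32 : 0 ≤ eAdj G K L := eAdj_nonneg G K L
    simp only [Fin.sum_univ_four, hP, hc, Matrix.cons_val_zero, Matrix.cons_val_one,
      Matrix.head_cons, Matrix.cons_val_two, Matrix.tail_cons, Matrix.cons_val_three,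
      Finset.card_singleton, hpL, hpK,
      e00, e01, e02, e03, e10, e11, e12, e13, e20, e21, e22, e30, e31, e33]
    have hp1' : (1 : ℝ) ≤ (p : ℝ) := by exact_mod_cast hp1
    push_cast
    nlinarith [e23, e32, mul_pos (show (0:ℝ) < 2 * (p:ℝ) by linarith)
      (show 0 < (lam + 2) * ((p:ℝ) + 1) - 1 by linarith)]
  · intro a b hab
    have hd1 : Disjoint ({x} : Finset V) {y} := by
      simp only [Finset.disjoint_singleton_left, Finset.mem_singleton]
      exact G.ne_of_adj hxy
    have hd2 : Disjoint ({x} : Finset V) L := Finset.disjoint_singleton_left.2 hxnL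
    have hd3 : Disjoint ({x} : Finset V) K := Finset.disjoint_singleton_left.2 hxnK
    have hd4 : Disjoint ({y} : Finset V) L := Finset.disjoint_singleton_left.2 hynL
    have hd5 : Disjoint ({y} : Finset V) K := Finset.disjoint_singleton_left.2 hynK
    fin_cases a <;> fin_cases b <;>
      simp only [hP, Matrix.cons_val_zero, Matrix.cons_val_one, Matrix.head_cons,
        Matrix.cons_val_two, Matrix.tail_cons, Matrix.cons_val_three] <;>
      first
        | exact (hab rfl).elim
        | exact hd1 | exact hd1.symm | exact hd2 | exact hd2.symm
        | exact hd3 | exact hd3.symm | exact hd4 | exact hd4.symm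
        | exact hd5 | exact hd5.symm | exact hLK | exact hLK.symm

/-- the one-sided case of the main argument -/
lemma onesided [Nonempty V] {G : SimpleGraph V} {lam : ℝ}
    (hlam : lam ≤ minEig G)
    {r p₃ p₄ M : ℕ}
    (hp₃1 : 1 ≤ p₃) (hp₄1 : 1 ≤ p₄)
    (hp₃ : 2 * (1 + (r : ℝ)) < (lam + 2) * ((p₃ : ℝ) + 2))
    (hp₄ : 1 < (lam + 2) * ((p₄ : ℝ) + 1))
    (hM1 : max p₃ p₄ + r + 3 ≤ M) (hM2 : p₃ + p₄ + 1 ≤ M)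
    (H4 : ∀ v : V, ∀ I ⊆ G.neighborFinset v,
      (∀ i ∈ I, ∀ j ∈ I, i ≠ j → ¬G.Adj i j) → I.card ≤ 3)
    (HB : ∀ a b : V, ¬G.Adj a b → a ≠ b →
      ((G.neighborFinset a ∩ G.neighborFinset b).card < r))
    (hdeg : ∀ v, RB 3 M + 3 ≤ (G.neighborFinset v).card)
    {x y : V} (hyx : G.Adj y x)
    {K : Finset V} (hKsub : K ⊆ G.neighborFinset y) (hxK : x ∉ K)
    (hKcl : ∀ i ∈ K, ∀ j ∈ K, i ≠ j → G.Adj i j) (hKcard : K.card = M)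
    (hsmall : (K ∩ G.neighborFinset x).card < r + 3) : False := by
  classical
  set K'' := K \ G.neighborFinset x with hK''
  have hK''sub : K'' ⊆ K := Finset.sdiff_subset
  have hK''card : max p₃ p₄ ≤ K''.card := by
    have hcover : K ⊆ K'' ∪ (K ∩ G.neighborFinset x) := by
      intro u hu
      by_cases hux : u ∈ G.neighborFinset x
      · exact Finset.mem_union.2 (Or.inr (Finset.mem_inter.2 ⟨hu, hux⟩))
      · exact Finset.mem_union.2 (Or.inl (Finset.mem_sdiff.2 ⟨hu, hux⟩))
    have h1 := Finset.card_le_card hcover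
    have h2 := Finset.card_union_le K'' (K ∩ G.neighborFinset x)
    omega
  -- a clique L of size M inside N(x) \ {y}
  have hLex : RB 3 M ≤ ((G.neighborFinset x).erase y).card := by
    have h1 := hdeg x
    have h2 := Finset.pred_card_le_card_erase (s := G.neighborFinset x) (a := y)
    omega
  obtain ⟨L, hLsub, hLcard, hLcl⟩ := ramsey G 3 M ((G.neighborFinset x).erase y)
    (fun I hI hind => H4 x I (hI.trans (Finset.erase_subset _ _)) hind) hLex
  have hLNx : L ⊆ G.neighborFinset x := hLsub.trans (Finset.erase_subset _ _)
  have hynL : y ∉ L := fun h => (Finset.mem_erase.1 (hLsub h)).1 rfl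
  by_cases hcase : p₃ ≤ (L ∩ G.neighborFinset y).card
  · -- V3 case
    obtain ⟨L', hL'sub, hL'card⟩ := Finset.exists_subset_card_eq hcase
    obtain ⟨Kt, hKtsub, hKtcard⟩ := Finset.exists_subset_card_eq
      (le_trans (le_max_left _ _) hK''card)
    have hL'L : L' ⊆ L := hL'sub.trans (Finset.inter_subset_left)
    have hL'Ny : L' ⊆ G.neighborFinset y := hL'sub.trans (Finset.inter_subset_right)
    obtain ⟨w, hw⟩ := gadgetV3 (G := G) (lam := lam) (y := y) (L := L') (K := Kt)
      (p := p₃) (r := r) hL'card hKtcard hp₃1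
      (fun j hj => (SimpleGraph.mem_neighborFinset _ _ _).1 (hL'Ny hj))
      (fun j hj => (SimpleGraph.mem_neighborFinset _ _ _).1 (hKsub (hK''sub (hKtsub hj))))
      (fun i hi j hj hij => hLcl i (hL'L hi) j (hL'L hj) hij)
      (fun i hi j hj hij => hKcl i (hK''sub (hKtsub hi)) j (hK''sub (hKtsub hj)) hij)
      (by
        rw [Finset.disjoint_left]
        intro u hu1 hu2
        exact (Finset.mem_sdiff.1 (hKtsub hu2)).2 (hLNx (hL'L hu1)))
      (by
        intro j hj
        have hjK'' := hKtsub hj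
        have hjnNx : j ∉ G.neighborFinset x := (Finset.mem_sdiff.1 hjK'').2
        have hxj : ¬G.Adj x j := fun h => hjnNx ((SimpleGraph.mem_neighborFinset _ _ _).2 h)
        have hnexj : x ≠ j := by
          intro h
          exact hxK (h ▸ hK''sub hjK'')
        have hB := HB x j hxj hnexj
        have hsub2 : L'.filter (fun i => G.Adj i j) ⊆
            G.neighborFinset x ∩ G.neighborFinset j := by
          intro i hi
          obtain ⟨hiL, hiadj⟩ := Finset.mem_filter.1 hi
          refine Finset.mem_inter.2 ⟨hLNx (hL'L hiL), ?_⟩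
          exact (SimpleGraph.mem_neighborFinset _ _ _).2 hiadj.symm
        have := Finset.card_le_card hsub2
        omega)
      hp₃
    exact key hlam w hw
  · -- V4 case
    set L'' := L \ G.neighborFinset y with hL''
    have hL''card : p₄ ≤ L''.card := by
      have hcover : L ⊆ L'' ∪ (L ∩ G.neighborFinset y) := by
        intro u hu
        by_cases huy : u ∈ G.neighborFinset y
        · exact Finset.mem_union.2 (Or.inr (Finset.mem_inter.2 ⟨hu, huy⟩))
        · exact Finset.mem_union.2 (Or.inl (Finset.mem_sdiff.2 ⟨hu, huy⟩))
      have h1 := Finset.card_le_card hcover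
      have h2 := Finset.card_union_le L'' (L ∩ G.neighborFinset y)
      omega
    obtain ⟨Lt, hLtsub, hLtcard⟩ := Finset.exists_subset_card_eq hL''card
    obtain ⟨Kt, hKtsub, hKtcard⟩ := Finset.exists_subset_card_eq
      (le_trans (le_max_right _ _) hK''card)
    have hLtL : Lt ⊆ L := hLtsub.trans Finset.sdiff_subset
    obtain ⟨w, hw⟩ := gadgetV4 (G := G) (lam := lam) (x := x) (y := y) (L := Lt) (K := Kt)
      (p := p₄) hyx.symm hLtcard hKtcard hp₄1
      (fun j hj => (SimpleGraph.mem_neighborFinset _ _ _).1 (hLNx (hLtL hj)))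
      (fun j hj => (SimpleGraph.mem_neighborFinset _ _ _).1 (hKsub (hK''sub (hKtsub hj))))
      (fun j hj h => (Finset.mem_sdiff.1 (hKtsub hj)).2
        ((SimpleGraph.mem_neighborFinset _ _ _).2 h))
      (fun j hj h => (Finset.mem_sdiff.1 (hLtsub hj)).2
        ((SimpleGraph.mem_neighborFinset _ _ _).2 h))
      (fun h => hxK (hK''sub (hKtsub h)))
      (fun h => hynL (hLtL h))
      (fun i hi j hj hij => hLcl i (hLtL hi) j (hLtL hj) hij)
      (fun i hi j hj hij => hKcl i (hK''sub (hKtsub hi)) j (hK''sub (hKtsub hj)) hij)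
      hp₄
    exact key hlam w hw

/-- main: no induced path of length 2 -/
lemma nocherry [Nonempty V] {G : SimpleGraph V} {lam : ℝ}
    (h1 : -2 < lam)
    (hlam : lam ≤ minEig G)
    {k₁ p₃ p₄ M : ℕ}
    (hk₁1 : 1 ≤ k₁) (hp₃1 : 1 ≤ p₃) (hp₄1 : 1 ≤ p₄)
    (hk₁ : 2 < (lam + 2) * ((k₁ : ℝ) + 2))
    (hp₃ : 2 * (1 + ((RB 3 k₁ : ℕ) : ℝ)) < (lam + 2) * ((p₃ : ℝ) + 2))
    (hp₄ : 1 < (lam + 2) * ((p₄ : ℝ) + 1))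
    (hM1 : max p₃ p₄ + RB 3 k₁ + 3 ≤ M) (hM2 : p₃ + p₄ + 1 ≤ M)
    (hdeg : ∀ v, RB 3 M + 3 ≤ (G.neighborFinset v).card) :
    ∀ y x z : V, G.Adj y x → G.Adj y z → x ≠ z → G.Adj x z := by
  intro y x z hyx hyz hne
  by_contra hxz
  set r := RB 3 k₁ with hr
  -- no independent 4-set in any neighbourhood
  have H4 : ∀ v : V, ∀ I ⊆ G.neighborFinset v,
      (∀ i ∈ I, ∀ j ∈ I, i ≠ j → ¬G.Adj i j) → I.card ≤ 3 := by
    intro v I hIsub hIind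
    by_contra hc
    push_neg at hc
    obtain ⟨I', hI'sub, hI'card⟩ := Finset.exists_subset_card_eq hc
    obtain ⟨w, hw⟩ := gadgetV0 h1 (y := v) hI'card
      (fun j hj => (SimpleGraph.mem_neighborFinset _ _ _).1 (hIsub (hI'sub hj)))
      (fun i hi j hj hij => hIind i (hI'sub hi) j (hI'sub hj) hij)
    exact key hlam w hw
  -- small common neighbourhoods of nonadjacent pairs
  have HB : ∀ a b : V, ¬G.Adj a b → a ≠ b →
      ((G.neighborFinset a ∩ G.neighborFinset b).card < r) := by
    intro a b hnadj hneab
    by_contra hge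
    push_neg at hge
    obtain ⟨K, hKsub, hKcard, hKcl⟩ := ramsey G 3 k₁
      (G.neighborFinset a ∩ G.neighborFinset b)
      (fun I hI hind => H4 a I (hI.trans Finset.inter_subset_left) hind) hge
    obtain ⟨w, hw⟩ := gadgetV1 (G := G) (lam := lam) (x := a) (z := b) (K := K) hnadj hneab hKcl
      (fun j hj => (SimpleGraph.mem_neighborFinset _ _ _).1 (Finset.mem_inter.1 (hKsub hj)).1)
      (fun j hj => (SimpleGraph.mem_neighborFinset _ _ _).1 (Finset.mem_inter.1 (hKsub hj)).2)
      (hKcard ▸ hk₁1) (hKcard ▸ hk₁)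
    exact key hlam w hw
  -- a clique K of size M inside N(y) \ {x, z}
  have hScard : RB 3 M ≤ (((G.neighborFinset y).erase x).erase z).card := by
    have h1 := hdeg y
    have h2 := Finset.pred_card_le_card_erase (s := G.neighborFinset y) (a := x)
    have h3 := Finset.pred_card_le_card_erase (s := (G.neighborFinset y).erase x) (a := z)
    omega
  obtain ⟨K, hKsub, hKcard, hKcl⟩ := ramsey G 3 M (((G.neighborFinset y).erase x).erase z)
    (fun I hI hind => H4 y I
      (hI.trans ((Finset.erase_subset _ _).trans (Finset.erase_subset _ _))) hind) hScard
  have hKNy : K ⊆ G.neighborFinset y :=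
    hKsub.trans ((Finset.erase_subset _ _).trans (Finset.erase_subset _ _))
  have hxnK : x ∉ K := fun h => (Finset.mem_erase.1 (Finset.mem_of_mem_erase (hKsub h))).1 rfl
  have hznK : z ∉ K := fun h => (Finset.mem_erase.1 (hKsub h)).1 rfl
  set A := (K ∩ G.neighborFinset x) \ G.neighborFinset z with hA
  set B := (K ∩ G.neighborFinset z) \ G.neighborFinset x with hB
  by_cases hAB : 3 ≤ A.card ∧ 3 ≤ B.card
  · -- gadget V2
    obtain ⟨A', hA'sub, hA'card⟩ := Finset.exists_subset_card_eq hAB.1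
    obtain ⟨B', hB'sub, hB'card⟩ := Finset.exists_subset_card_eq hAB.2
    have hA'K : A' ⊆ K := fun u hu =>
      (Finset.mem_inter.1 (Finset.mem_sdiff.1 (hA'sub hu)).1).1
    have hB'K : B' ⊆ K := fun u hu =>
      (Finset.mem_inter.1 (Finset.mem_sdiff.1 (hB'sub hu)).1).1
    obtain ⟨w, hw⟩ := gadgetV2 (G := G) (lam := lam) h1 (x := x) (z := z) (K₁ := A') (K₂ := B')
      hxz hne hA'card hB'card
      (fun i hi j hj hij => hKcl i (hA'K hi) j (hA'K hj) hij)
      (fun i hi j hj hij => hKcl i (hB'K hi) j (hB'K hj) hij)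
      (fun j hj => (SimpleGraph.mem_neighborFinset _ _ _).1
        (Finset.mem_inter.1 (Finset.mem_sdiff.1 (hA'sub hj)).1).2)
      (fun j hj => (SimpleGraph.mem_neighborFinset _ _ _).1
        (Finset.mem_inter.1 (Finset.mem_sdiff.1 (hB'sub hj)).1).2)
      (fun j hj h => (Finset.mem_sdiff.1 (hA'sub hj)).2
        ((SimpleGraph.mem_neighborFinset _ _ _).2 h))
      (fun j hj h => (Finset.mem_sdiff.1 (hB'sub hj)).2
        ((SimpleGraph.mem_neighborFinset _ _ _).2 h))
      (fun i hi j hj => by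
        refine hKcl i (hA'K hi) j (hB'K hj) ?_
        intro hij
        subst hij
        exact (Finset.mem_sdiff.1 (hB'sub hj)).2
          (Finset.mem_inter.1 (Finset.mem_sdiff.1 (hA'sub hi)).1).2)
    exact key hlam w hw
  · -- one-sided cases
    have hxzcommon := HB x z hxz hne
    rcases not_and_or.1 hAB with hside | hside
    · push_neg at hside
      have hsmall : (K ∩ G.neighborFinset x).card < r + 3 := by
        have hcover : K ∩ G.neighborFinset x ⊆
            A ∪ (G.neighborFinset x ∩ G.neighborFinset z) := by
          intro u hu
          obtain ⟨huK, huNx⟩ := Finset.mem_inter.1 hu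
          by_cases huz : u ∈ G.neighborFinset z
          · exact Finset.mem_union.2 (Or.inr (Finset.mem_inter.2 ⟨huNx, huz⟩))
          · exact Finset.mem_union.2 (Or.inl (Finset.mem_sdiff.2 ⟨hu, huz⟩))
        have hc1 := Finset.card_le_card hcover
        have hc2 := Finset.card_union_le A (G.neighborFinset x ∩ G.neighborFinset z)
        omega
      exact onesided hlam hp₃1 hp₄1 hp₃ hp₄ hM1 hM2 H4 HB hdeg hyx hKNy hxnK hKcl hKcard hsmall
    · push_neg at hside
      have hsmall : (K ∩ G.neighborFinset z).card < r + 3 := by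
        have hcover : K ∩ G.neighborFinset z ⊆
            B ∪ (G.neighborFinset x ∩ G.neighborFinset z) := by
          intro u hu
          obtain ⟨huK, huNz⟩ := Finset.mem_inter.1 hu
          by_cases hux : u ∈ G.neighborFinset x
          · exact Finset.mem_union.2 (Or.inr (Finset.mem_inter.2 ⟨hux, huNz⟩))
          · exact Finset.mem_union.2 (Or.inl (Finset.mem_sdiff.2 ⟨hu, hux⟩))
        have hc1 := Finset.card_le_card hcover
        have hc2 := Finset.card_union_le B (G.neighborFinset x ∩ G.neighborFinset z)
        omega
      exact onesided hlam hp₃1 hp₄1 hp₃ hp₄ hM1 hM2 H4 HB hdeg hyz hKNy hznK hKcl hKcard hsmall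

lemma reach_adj {G : SimpleGraph V}
    (NC : ∀ y x z : V, G.Adj y x → G.Adj y z → x ≠ z → G.Adj x z) :
    ∀ x y : V, G.Reachable x y → x ≠ y → G.Adj x y := by
  suffices H : ∀ (a b : V) (p : G.Walk a b), a ≠ b → G.Adj a b by
    intro x y hreach hne
    obtain ⟨p⟩ := hreach
    exact H x y p hne
  intro a b p
  induction p with
  | nil => intro h; exact absurd rfl h
  | @cons u v w h q ih =>
    intro hne
    by_cases hvw : v = w
    · subst hvw; exact h
    · exact NC v u w h.symm (ih hvw) hne

-- the ceil-based constants
lemma const_facts (lam : ℝ) (h1 : -2 < lam) :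
    ∀ s : ℝ, 0 ≤ s → s < (lam + 2) * ((⌈s / (lam + 2)⌉₊ : ℝ) + 1 + 1) := by
  intro s hs
  have hε : 0 < lam + 2 := by linarith
  have hceil : s / (lam + 2) ≤ (⌈s / (lam + 2)⌉₊ : ℝ) := Nat.le_ceil _
  have h2 : s ≤ (lam + 2) * (⌈s / (lam + 2)⌉₊ : ℝ) := by
    rw [← div_le_iff₀' hε]
    exact hceil
  nlinarith

/-- **Hoffman.** For every real `λ ∈ (-2, -1]` there is a constant `C₁(λ)` such that any
(nonempty) graph with smallest eigenvalue at least `λ` and minimum degree at least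
`C₁(λ)` has smallest eigenvalue exactly `-1` and is a disjoint union of cliques
(any two distinct vertices in the same connected component are adjacent). -/
theorem stmt6 (lam : ℝ) (h1 : -2 < lam) (h2 : lam ≤ -1) :
    ∃ C : ℝ, ∀ (n : ℕ) (G : SimpleGraph (Fin n)), 0 < n →
      lam ≤ minEig G → (∀ v, C ≤ (deg G v : ℝ)) →
      minEig G = -1 ∧ ∀ x y : Fin n, G.Reachable x y → x ≠ y → G.Adj x y := by
  have hε : 0 < lam + 2 := by linarith
  set k₁ : ℕ := ⌈2 / (lam + 2)⌉₊ + 1 with hk₁def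
  set r : ℕ := RB 3 k₁ with hrdef
  set p₃ : ℕ := ⌈(2 * (1 + (r : ℝ))) / (lam + 2)⌉₊ + 1 with hp₃def
  set p₄ : ℕ := ⌈1 / (lam + 2)⌉₊ + 1 with hp₄def
  set M : ℕ := max (max p₃ p₄ + r + 3) (p₃ + p₄ + 1) with hMdef
  have hk₁1 : 1 ≤ k₁ := by omega
  have hp₃1 : 1 ≤ p₃ := by omega
  have hp₄1 : 1 ≤ p₄ := by omega
  have hk₁cond : 2 < (lam + 2) * ((k₁ : ℝ) + 2) := by
    have hcf := const_facts lam h1 2 (by norm_num)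
    have hcast : ((k₁ : ℕ) : ℝ) = (⌈2 / (lam + 2)⌉₊ : ℝ) + 1 := by
      rw [hk₁def]; push_cast; ring
    nlinarith [hcf, hε]
  have hp₃cond : 2 * (1 + (r : ℝ)) < (lam + 2) * ((p₃ : ℝ) + 2) := by
    have hrpos : (0 : ℝ) ≤ 2 * (1 + (r : ℝ)) := by positivity
    have hcf := const_facts lam h1 (2 * (1 + (r : ℝ))) hrpos
    have hcast : ((p₃ : ℕ) : ℝ) = (⌈(2 * (1 + (r : ℝ))) / (lam + 2)⌉₊ : ℝ) + 1 := by
      rw [hp₃def]; push_cast; ring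
    nlinarith [hcf, hε]
  have hp₄cond : 1 < (lam + 2) * ((p₄ : ℝ) + 1) := by
    have hcf := const_facts lam h1 1 (by norm_num)
    have hcast : ((p₄ : ℕ) : ℝ) = (⌈1 / (lam + 2)⌉₊ : ℝ) + 1 := by
      rw [hp₄def]; push_cast; ring
    nlinarith [hcf, hε]
  have hM1 : max p₃ p₄ + r + 3 ≤ M := le_max_left _ _
  have hM2 : p₃ + p₄ + 1 ≤ M := le_max_right _ _
  refine ⟨(RB 3 M : ℝ) + 3, ?_⟩
  intro n G hn hminEig hdegC
  haveI : Nonempty (Fin n) := ⟨⟨0, hn⟩⟩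
  have hdeg : ∀ v, RB 3 M + 3 ≤ (G.neighborFinset v).card := by
    intro v
    have h := hdegC v
    have hdv : deg G v = (G.neighborFinset v).card := by
      rw [deg]
      exact Set.ncard_eq_toFinset_card' (G.neighborSet v)
    rw [hdv] at h
    exact_mod_cast h
  have NC := nocherry h1 hminEig hk₁1 hp₃1 hp₄1 hk₁cond hp₃cond hp₄cond hM1 hM2 hdeg
  have hcl : ∀ x y : Fin n, G.Reachable x y → x ≠ y → G.Adj x y := reach_adj NC
  refine ⟨?_, hcl⟩
  have v : Fin n := Classical.arbitrary (Fin n)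
  have hd := hdeg v
  have hpos : 0 < (G.neighborFinset v).card := by omega
  obtain ⟨u, hu⟩ := Finset.card_pos.1 hpos
  exact minEig_unionCliques hcl ((SimpleGraph.mem_neighborFinset _ _ _).1 hu)

end Hoffman
end
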